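/- One-shot Heegard–Berger/Kaspi achievability: Let q_{S,Y} be a pmf on finite sets 𝒮 × 𝒴 (source and side information), let d₁ : 𝒮 × Ŝ₁ → [0,∞) and d₂ : 𝒮 × Ŝ₂ → [0,∞) be distortion measures with levels D₁, D₂ ≥ 0. For any conditional pmf q_{W,U|S} to finite sets 𝒲 × 𝒰, any reconstruction functions ŝ₁ : 𝒲 → Ŝ₁ and ŝ₂ : 𝒲 × 𝒰 × 𝒴 → Ŝ₂, and positive integers M₁, M₂, J₂ with M = M₁·M₂ and J₂ ≥ M₂, define q(s,y,w,u) = q(s,y)·q(w,u|s). Then there exists an M-code whose probability of no-excess distortion satisfies P[ d₁(S,Ŝ₁) ≤ D₁ and d₂(S,Ŝ₂) ≤ D₂ ] ≥ E_q [ 1{ d₁(S, ŝ₁(W)) ≤ D₁ and d₂(S, ŝ₂(W,U,Y)) ≤ D₂ } / ( (1 + M₁^{−1}·2^{i_q(S;W)} + (M₁J₂)^{−1}·2^{i_q(S;W,U)}) · (1 + J₂M₂^{−1}·2^{−i_q(Y;U|W)}) ) ]. -/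

import Mathlib

open scoped BigOperators

/-- A pmf on a finite type, represented by a nonnegative real-valued function summing to 1. -/
structure FinPMF (α : Type) [Fintype α] where
  p : α → ℝ
  nonneg : ∀ a, 0 ≤ p a
  sum_eq_one : ∑ a, p a = 1

open Classical in
/-- Indicator of a proposition, as a real number. -/
noncomputable def ind (P : Prop) : ℝ := if P then 1 else 0

variable {S Y W U R1 R2 : Type}
  [Fintype S] [Fintype Y] [Fintype W] [Fintype U] [Fintype R1] [Fintype R2]

/-- The joint pmf `q(s,y,w,u) = q(s,y) q(w,u|s)`. -/
noncomputable def qHB (qSY : FinPMF (S × Y)) (qWU : S → FinPMF (W × U))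
    (s : S) (y : Y) (w : W) (u : U) : ℝ :=
  qSY.p (s, y) * (qWU s).p (w, u)

noncomputable def mS (qSY : FinPMF (S × Y)) (s : S) : ℝ :=
  ∑ y : Y, qSY.p (s, y)

noncomputable def mSW (qSY : FinPMF (S × Y)) (qWU : S → FinPMF (W × U))
    (s : S) (w : W) : ℝ :=
  mS qSY s * ∑ u : U, (qWU s).p (w, u)

noncomputable def mW (qSY : FinPMF (S × Y)) (qWU : S → FinPMF (W × U)) (w : W) : ℝ :=
  ∑ s : S, mSW qSY qWU s w

noncomputable def mSWU (qSY : FinPMF (S × Y)) (qWU : S → FinPMF (W × U))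
    (s : S) (w : W) (u : U) : ℝ :=
  mS qSY s * (qWU s).p (w, u)

noncomputable def mWU (qSY : FinPMF (S × Y)) (qWU : S → FinPMF (W × U))
    (w : W) (u : U) : ℝ :=
  ∑ s : S, mSWU qSY qWU s w u

noncomputable def mYW (qSY : FinPMF (S × Y)) (qWU : S → FinPMF (W × U))
    (y : Y) (w : W) : ℝ :=
  ∑ s : S, ∑ u : U, qHB qSY qWU s y w u

noncomputable def mYUW (qSY : FinPMF (S × Y)) (qWU : S → FinPMF (W × U))
    (y : Y) (u : U) (w : W) : ℝ :=
  ∑ s : S, qHB qSY qWU s y w u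

/-- Information density `i_q(S;W)`. -/
noncomputable def iSW (qSY : FinPMF (S × Y)) (qWU : S → FinPMF (W × U))
    (s : S) (w : W) : ℝ :=
  Real.logb 2 (mSW qSY qWU s w / (mS qSY s * mW qSY qWU w))

/-- Information density `i_q(S;W,U)`, treating `(W,U)` as a single variable. -/
noncomputable def iSWU (qSY : FinPMF (S × Y)) (qWU : S → FinPMF (W × U))
    (s : S) (w : W) (u : U) : ℝ :=
  Real.logb 2 (mSWU qSY qWU s w u / (mS qSY s * mWU qSY qWU w u))

/-- Conditional information density `i_q(Y;U|W)`. -/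
noncomputable def iYUcW (qSY : FinPMF (S × Y)) (qWU : S → FinPMF (W × U))
    (y : Y) (u : U) (w : W) : ℝ :=
  Real.logb 2 (mYUW qSY qWU y u w * mW qSY qWU w / (mYW qSY qWU y w * mWU qSY qWU w u))

/-- Probability of no-excess distortion `P[d₁(S,Ŝ₁) ≤ D₁ and d₂(S,Ŝ₂) ≤ D₂]` of an
`M`-code for lossy source coding when side information may be absent:
`Ŝ₁ = ψ₁(φ(S))`, `Ŝ₂ = ψ₂(φ(S), Y)` with stochastic encoder/decoders. -/
noncomputable def pNoExcessHB (M : ℕ) (qSY : FinPMF (S × Y))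
    (d1 : S → R1 → ℝ) (d2 : S → R2 → ℝ) (D1 D2 : ℝ)
    (enc : S → FinPMF (Fin M)) (dec1 : Fin M → FinPMF R1)
    (dec2 : Fin M → Y → FinPMF R2) : ℝ :=
  ∑ s : S, ∑ y : Y, ∑ m : Fin M, ∑ r1 : R1, ∑ r2 : R2,
    qSY.p (s, y) * (enc s).p m * (dec1 m).p r1 * (dec2 m y).p r2 *
      ind (d1 s r1 ≤ D1 ∧ d2 s r2 ≤ D2)


-- ===================== generic indicator lemmas =====================

lemma ind_nonneg' (P : Prop) : 0 ≤ ind P := by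
  unfold ind; split <;> norm_num

lemma ind_true {P : Prop} (h : P) : ind P = 1 := by
  unfold ind; split <;> tauto

lemma ind_false {P : Prop} (h : ¬ P) : ind P = 0 := by
  unfold ind; split <;> tauto

lemma ind_and (P Q : Prop) : ind (P ∧ Q) = ind P * ind Q := by
  unfold ind; by_cases hP : P <;> by_cases hQ : Q <;> simp [hP, hQ]

lemma sum_ind_eq {α : Type} [Fintype α] (a : α) (f : α → ℝ) :
    ∑ x : α, ind (a = x) * f x = f a := by
  classical
  have h : ∀ x : α, ind (a = x) * f x = if a = x then f x else 0 := by
    intro x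
    by_cases h : a = x <;> simp [ind_true, ind_false, h, ind]
  simp only [h]
  rw [Finset.sum_ite_eq Finset.univ a f]
  simp

-- ===================== FinPMF helpers =====================

namespace FinPMF

variable {α β : Type} [Fintype α] [Fintype β]

lemma nonempty' (P : FinPMF α) : Nonempty α := by
  by_contra h
  have h0 : (∑ a : α, P.p a) = 0 := by
    apply Finset.sum_eq_zero
    intro a _
    exact absurd ⟨a⟩ h
  rw [P.sum_eq_one] at h0
  norm_num at h0

open Classical in
noncomputable def purePMF (a : α) : FinPMF α :=
  ⟨fun b => if b = a then 1 else 0,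
   fun b => by split <;> norm_num,
   by rw [Finset.sum_ite_eq' Finset.univ a fun _ => (1:ℝ)]; simp⟩

open Classical in
lemma purePMF_apply (a b : α) : (purePMF a).p b = if b = a then 1 else 0 := rfl

open Classical in
noncomputable def mapPMF (f : α → β) (P : FinPMF α) : FinPMF β :=
  ⟨fun b => ∑ a, if f a = b then P.p a else 0,
   fun b => by
     apply Finset.sum_nonneg
     intro a _
     split
     · exact P.nonneg a
     · exact le_refl 0,
   by
     rw [Finset.sum_comm]
     have h : ∀ a : α, (∑ b : β, if f a = b then P.p a else 0) = P.p a := by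
       intro a
       rw [Finset.sum_ite_eq Finset.univ (f a) (fun _ => P.p a)]
       simp
     rw [Finset.sum_congr rfl fun a _ => h a, P.sum_eq_one]⟩

open Classical in
lemma mapPMF_apply (f : α → β) (P : FinPMF α) (b : β) :
    (mapPMF f P).p b = ∑ a, if f a = b then P.p a else 0 := rfl

open Classical in
noncomputable def normPMF [Nonempty α] (h : α → ℝ) : FinPMF α :=
  if H : (0 < ∑ a, h a) ∧ ∀ a, 0 ≤ h a then
    ⟨fun a => h a / ∑ b, h b,
     fun a => div_nonneg (H.2 a) (le_of_lt H.1),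
     by rw [← Finset.sum_div, div_self (ne_of_gt H.1)]⟩
  else
    ⟨fun _ => (Fintype.card α : ℝ)⁻¹,
     fun a => by positivity,
     by
       rw [Finset.sum_const, Finset.card_univ, nsmul_eq_mul, mul_inv_cancel₀]
       exact_mod_cast Fintype.card_ne_zero⟩

lemma normPMF_ge [Nonempty α] (h : α → ℝ) (hh : ∀ a, 0 ≤ h a) (a : α) :
    h a / ∑ b, h b ≤ (normPMF h).p a := by
  unfold normPMF
  split
  · next H => exact le_of_eq rfl
  · next H =>
    have hs : (∑ b, h b) = 0 := by
      by_contra hne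
      have hpos : 0 < ∑ b, h b :=
        lt_of_le_of_ne (Finset.sum_nonneg fun b _ => hh b) (Ne.symm hne)
      exact H ⟨hpos, hh⟩
    have ha : h a = 0 := by
      have := (Finset.sum_eq_zero_iff_of_nonneg (fun b _ => hh b)).mp hs a (Finset.mem_univ a)
      exact this
    rw [ha, hs]
    simp

end FinPMF

-- ===================== product-sum factorization =====================

section ProdSum

open Finset

variable {ι κ : Type} [Fintype ι] [DecidableEq ι] [Fintype κ]

lemma sum_fun_prod (g : ι → κ → ℝ) :
    (∑ f : ι → κ, ∏ i, g i (f i)) = ∏ i, ∑ k, g i k := by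
  rw [Finset.prod_univ_sum (fun _ => Finset.univ) g, Fintype.piFinset_univ]

lemma prod_two_marks {i₀ i₁ : ι} (hne : i₀ ≠ i₁) (F : ι → ℝ)
    (h0 : ∀ i, i ≠ i₀ → i ≠ i₁ → F i = 1) :
    ∏ i, F i = F i₀ * F i₁ := by
  rw [← Finset.mul_prod_erase Finset.univ F (Finset.mem_univ i₀)]
  congr 1
  rw [← Finset.mul_prod_erase (Finset.univ.erase i₀) F
    (Finset.mem_erase.mpr ⟨hne.symm, Finset.mem_univ i₁⟩)]
  have : ∏ x ∈ (Finset.univ.erase i₀).erase i₁, F x = 1 := by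
    apply Finset.prod_eq_one
    intro i hi
    have h1 : i ≠ i₁ := (Finset.mem_erase.mp hi).1
    have h2 : i ≠ i₀ := (Finset.mem_erase.mp (Finset.mem_erase.mp hi).2).1
    exact h0 i h2 h1
  rw [this, mul_one]

variable (p : κ → ℝ)

lemma sum_prod_const (hp : ∑ k, p k = 1) : (∑ f : ι → κ, ∏ i, p (f i)) = 1 := by
  rw [sum_fun_prod (fun _ k => p k)]
  simp [hp]

lemma sum_prod_single (hp : ∑ k, p k = 1) (i₀ : ι) (φ : κ → ℝ) :
    (∑ f : ι → κ, (∏ i, p (f i)) * φ (f i₀)) = ∑ k, p k * φ k := by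
  have h1 : ∀ f : ι → κ, (∏ i, p (f i)) * φ (f i₀)
      = ∏ i, (p (f i) * if i = i₀ then φ (f i) else 1) := by
    intro f
    rw [Finset.prod_mul_distrib, Finset.prod_ite_eq' Finset.univ i₀ (fun i => φ (f i))]
    simp
  rw [Finset.sum_congr rfl fun f _ => h1 f,
    sum_fun_prod (fun i k => p k * if i = i₀ then φ k else 1)]
  have h2 : ∀ i : ι, (∑ k, p k * if i = i₀ then φ k else 1)
      = if i = i₀ then ∑ k, p k * φ k else 1 := by
    intro i
    by_cases hi : i = i₀ <;> simp [hi, hp]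
  rw [Finset.prod_congr rfl fun i _ => h2 i,
    Finset.prod_ite_eq' Finset.univ i₀ (fun _ => ∑ k, p k * φ k)]
  simp

lemma sum_prod_pair (hp : ∑ k, p k = 1) {i₀ i₁ : ι} (hne : i₀ ≠ i₁) (φ ψ : κ → ℝ) :
    (∑ f : ι → κ, (∏ i, p (f i)) * (φ (f i₀) * ψ (f i₁)))
      = (∑ k, p k * φ k) * (∑ k, p k * ψ k) := by
  have h1 : ∀ f : ι → κ, (∏ i, p (f i)) * (φ (f i₀) * ψ (f i₁))
      = ∏ i, (p (f i) * if i = i₀ then φ (f i) else if i = i₁ then ψ (f i) else 1) := by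
    intro f
    rw [Finset.prod_mul_distrib]
    congr 1
    rw [prod_two_marks hne _ (by intro i hi0 hi1; simp [hi0, hi1])]
    simp [hne.symm]
  rw [Finset.sum_congr rfl fun f _ => h1 f,
    sum_fun_prod (fun i k => p k * if i = i₀ then φ k else if i = i₁ then ψ k else 1)]
  have h2 : ∀ i : ι, (∑ k, p k * if i = i₀ then φ k else if i = i₁ then ψ k else 1)
      = if i = i₀ then (∑ k, p k * φ k) else if i = i₁ then (∑ k, p k * ψ k) else 1 := by
    intro i
    by_cases h0 : i = i₀ <;> by_cases h1 : i = i₁ <;> simp [h0, h1, hp]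
  rw [Finset.prod_congr rfl fun i _ => h2 i,
    prod_two_marks hne _ (by intro i hi0 hi1; simp [hi0, hi1])]
  simp [hne.symm]

end ProdSum

-- ===================== tangent (joint convexity) =====================

lemma tangent_ineq {P Q pb qb : ℝ} (hP : 0 < P) (hQ : 0 < Q) (hpb : 0 < pb) (hqb : 0 < qb) :
    (3 - P/pb - Q/qb) / (pb*qb) ≤ 1/(P*Q) := by
  have ha : 0 < P/pb := div_pos hP hpb
  have hb : 0 < Q/qb := div_pos hQ hqb
  have key : (3 - P/pb - Q/qb) * ((P/pb)*(Q/qb)) ≤ 1 := by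
    nlinarith [sq_nonneg (P/pb - Q/qb), sq_nonneg ((P/pb)*(Q/qb) - 1),
      sq_nonneg (P/pb + Q/qb - 2), mul_pos ha hb,
      sq_nonneg ((P/pb)*(Q/qb) - P/pb), sq_nonneg ((P/pb)*(Q/qb) - Q/qb)]
  have hPQ : P*Q = ((P/pb)*(Q/qb))*(pb*qb) := by
    field_simp
  rw [hPQ, div_le_div_iff₀ (by positivity) (by positivity)]
  calc (3 - P/pb - Q/qb) * ((P/pb)*(Q/qb)*(pb*qb))
      = ((3 - P/pb - Q/qb) * ((P/pb)*(Q/qb))) * (pb*qb) := by ring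
    _ ≤ 1 * (pb*qb) := mul_le_mul_of_nonneg_right key (by positivity)


-- ===================== masses lemmas =====================

section Masses

open Finset

variable (qSY : FinPMF (S × Y)) (qWU : S → FinPMF (W × U))

lemma qHB_nonneg (s y w u) : 0 ≤ qHB qSY qWU s y w u :=
  mul_nonneg (qSY.nonneg _) ((qWU s).nonneg _)

lemma mS_nonneg (s : S) : 0 ≤ mS qSY s :=
  Finset.sum_nonneg fun y _ => qSY.nonneg _

lemma mSWU_nonneg (s w u) : 0 ≤ mSWU qSY qWU s w u :=
  mul_nonneg (mS_nonneg qSY s) ((qWU s).nonneg _)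

lemma mWU_nonneg (w u) : 0 ≤ mWU qSY qWU w u :=
  Finset.sum_nonneg fun s _ => mSWU_nonneg qSY qWU s w u

lemma mSW_nonneg (s w) : 0 ≤ mSW qSY qWU s w :=
  mul_nonneg (mS_nonneg qSY s) (Finset.sum_nonneg fun u _ => (qWU s).nonneg _)

lemma mW_nonneg (w) : 0 ≤ mW qSY qWU w :=
  Finset.sum_nonneg fun s _ => mSW_nonneg qSY qWU s w

lemma mYW_nonneg (y w) : 0 ≤ mYW qSY qWU y w :=
  Finset.sum_nonneg fun s _ => Finset.sum_nonneg fun u _ => qHB_nonneg qSY qWU s y w u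

lemma mYUW_nonneg (y u w) : 0 ≤ mYUW qSY qWU y u w :=
  Finset.sum_nonneg fun s _ => qHB_nonneg qSY qWU s y w u

lemma qSY_le_mS (s y) : qSY.p (s, y) ≤ mS qSY s :=
  Finset.single_le_sum (fun y' _ => qSY.nonneg (s, y')) (Finset.mem_univ y)

lemma sum_mS (hq : qSY.p = qSY.p) : ∑ s, mS qSY s = 1 := by
  unfold mS
  rw [← qSY.sum_eq_one, Fintype.sum_prod_type]

lemma sum_u_mSWU (s w) : ∑ u, mSWU qSY qWU s w u = mSW qSY qWU s w := by
  unfold mSWU mSW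
  rw [Finset.mul_sum]

lemma sum_w_mSW (s) : ∑ w, mSW qSY qWU s w = mS qSY s := by
  unfold mSW
  rw [← Finset.mul_sum, ← Fintype.sum_prod_type, (qWU s).sum_eq_one, mul_one]

lemma sum_mW : ∑ w, mW qSY qWU w = 1 := by
  unfold mW
  rw [Finset.sum_comm]
  rw [Finset.sum_congr rfl fun s _ => sum_w_mSW qSY qWU s]
  exact sum_mS qSY rfl

lemma sum_u_mWU (w) : ∑ u, mWU qSY qWU w u = mW qSY qWU w := by
  unfold mWU mW
  rw [Finset.sum_comm]
  exact Finset.sum_congr rfl fun s _ => sum_u_mSWU qSY qWU s w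

lemma mSWU_le_mWU (s w u) : mSWU qSY qWU s w u ≤ mWU qSY qWU w u :=
  Finset.single_le_sum (fun s' _ => mSWU_nonneg qSY qWU s' w u) (Finset.mem_univ s)

lemma mSW_le_mW (s w) : mSW qSY qWU s w ≤ mW qSY qWU w :=
  Finset.single_le_sum (fun s' _ => mSW_nonneg qSY qWU s' w) (Finset.mem_univ s)

lemma mWU_le_mW (w u) : mWU qSY qWU w u ≤ mW qSY qWU w := by
  rw [← sum_u_mWU qSY qWU w]
  exact Finset.single_le_sum (fun u' _ => mWU_nonneg qSY qWU w u') (Finset.mem_univ u)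

lemma sum_u_mYUW (y w) : ∑ u, mYUW qSY qWU y u w = mYW qSY qWU y w := by
  unfold mYUW mYW
  rw [Finset.sum_comm]

lemma mYUW_le_mWU (y u w) : mYUW qSY qWU y u w ≤ mWU qSY qWU w u := by
  unfold mYUW mWU qHB mSWU
  apply Finset.sum_le_sum
  intro s _
  exact mul_le_mul_of_nonneg_right (qSY_le_mS qSY s y) ((qWU s).nonneg _)

lemma mYW_le_mW (y w) : mYW qSY qWU y w ≤ mW qSY qWU w := by
  rw [← sum_u_mYUW qSY qWU y w, ← sum_u_mWU qSY qWU w]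
  exact Finset.sum_le_sum fun u _ => mYUW_le_mWU qSY qWU y u w

end Masses

-- ===================== more indicator lemmas =====================

lemma ind_congr {P Q : Prop} (h : P ↔ Q) : ind P = ind Q := by
  by_cases hP : P
  · rw [ind_true hP, ind_true (h.mp hP)]
  · rw [ind_false hP, ind_false (fun hq => hP (h.mpr hq))]

lemma ind_pair {α β : Type} (a c : α) (b d : β) :
    ind ((a, b) = (c, d)) = ind (a = c) * ind (b = d) := by
  rw [← ind_and]
  exact ind_congr (by simp [Prod.ext_iff])

lemma sum_ind_eq' {α : Type} [Fintype α] (a : α) (f : α → ℝ) :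
    ∑ x : α, ind (x = a) * f x = f a := by
  rw [Finset.sum_congr rfl fun x _ => by
    rw [ind_congr (eq_comm : (x = a) ↔ (a = x))]]
  exact sum_ind_eq a f

lemma sum_mul_ind_eq {α : Type} [Fintype α] (a : α) (f : α → ℝ) :
    ∑ x : α, f x * ind (x = a) = f a := by
  rw [Finset.sum_congr rfl fun x _ => mul_comm (f x) (ind (x = a))]
  exact sum_ind_eq' a f

open Classical in
lemma ite_eq_ind {P : Prop} [Decidable P] (x : ℝ) : (if P then x else 0) = ind P * x := by
  by_cases h : P <;> simp [h, ind_true, ind_false]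

-- ===================== the random code construction =====================

section Construction

open Finset

variable (qSY : FinPMF (S × Y)) (qWU : S → FinPMF (W × U))

/-- conditional pmf of `U` given `W` under the marginal on `(W,U)`. -/
noncomputable def hbPUW (w : W) (u : U) : ℝ :=
  if 0 < mW qSY qWU w then mWU qSY qWU w u / mW qSY qWU w else (Fintype.card U : ℝ)⁻¹

/-- `p(s | w,u)` (with junk value `0` when undefined). -/
noncomputable def hbPS (s : S) (w : W) (u : U) : ℝ :=
  mSWU qSY qWU s w u / mWU qSY qWU w u

/-- `p(y | w,u)` (with junk value `0` when undefined). -/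
noncomputable def hbPY (y : Y) (w : W) (u : U) : ℝ :=
  mYUW qSY qWU y u w / mWU qSY qWU w u

lemma hbPUW_nonneg (w u) : 0 ≤ hbPUW qSY qWU w u := by
  unfold hbPUW
  split
  · exact div_nonneg (mWU_nonneg qSY qWU w u) (mW_nonneg qSY qWU w)
  · positivity

lemma hbPS_nonneg (s w u) : 0 ≤ hbPS qSY qWU s w u :=
  div_nonneg (mSWU_nonneg qSY qWU s w u) (mWU_nonneg qSY qWU w u)

lemma hbPY_nonneg (y w u) : 0 ≤ hbPY qSY qWU y w u :=
  div_nonneg (mYUW_nonneg qSY qWU y u w) (mWU_nonneg qSY qWU w u)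

lemma hbPUW_sum (hU : Nonempty U) (w : W) : ∑ u, hbPUW qSY qWU w u = 1 := by
  unfold hbPUW
  split
  · next h =>
    rw [← Finset.sum_div, sum_u_mWU qSY qWU w, div_self (ne_of_gt h)]
  · rw [Finset.sum_const, Finset.card_univ, nsmul_eq_mul, mul_inv_cancel₀]
    exact_mod_cast Fintype.card_ne_zero

/-- if `mW w = 0` then `hbPS s w u = 0`. -/
lemma hbPS_eq_zero_of_mW_zero {w : W} (h : ¬ 0 < mW qSY qWU w) (s : S) (u : U) :
    hbPS qSY qWU s w u = 0 := by
  have hw : mW qSY qWU w = 0 := le_antisymm (not_lt.mp h) (mW_nonneg qSY qWU w)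
  have hwu : mWU qSY qWU w u = 0 := by
    have h1 := mWU_le_mW qSY qWU w u
    have h2 := mWU_nonneg qSY qWU w u
    linarith
  have hswu : mSWU qSY qWU s w u = 0 := by
    have h1 := mSWU_le_mWU qSY qWU s w u
    have h2 := mSWU_nonneg qSY qWU s w u
    linarith
  unfold hbPS
  rw [hswu, hwu]
  simp

/-- conditional expectation bound: `mW w * E_{U|w}[p(s|w,U)] ≤ mSW s w`. -/
lemma hbEU_S_le (s : S) (w : W) :
    mW qSY qWU w * (∑ u', hbPUW qSY qWU w u' * hbPS qSY qWU s w u') ≤ mSW qSY qWU s w := by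
  by_cases h : 0 < mW qSY qWU w
  · rw [Finset.mul_sum]
    rw [← sum_u_mSWU qSY qWU s w]
    apply Finset.sum_le_sum
    intro u' _
    unfold hbPUW
    rw [if_pos h]
    rw [show mW qSY qWU w * (mWU qSY qWU w u' / mW qSY qWU w * hbPS qSY qWU s w u')
        = mWU qSY qWU w u' * hbPS qSY qWU s w u' * (mW qSY qWU w / mW qSY qWU w) by ring,
      div_self (ne_of_gt h), mul_one]
    unfold hbPS
    by_cases hwu : mWU qSY qWU w u' = 0
    · rw [hwu]
      simp [mSWU_nonneg qSY qWU s w u']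
    · rw [mul_div_assoc', mul_comm, mul_div_assoc, div_self hwu, mul_one]
  · have hw : mW qSY qWU w = 0 := le_antisymm (not_lt.mp h) (mW_nonneg qSY qWU w)
    rw [hw, zero_mul]
    exact mSW_nonneg qSY qWU s w

/-- conditional expectation bound: `mW w * E_{U|w}[p(y|w,U)] ≤ mYW y w`. -/
lemma hbEU_Y_le (y : Y) (w : W) :
    mW qSY qWU w * (∑ u', hbPUW qSY qWU w u' * hbPY qSY qWU y w u') ≤ mYW qSY qWU y w := by
  by_cases h : 0 < mW qSY qWU w
  · rw [Finset.mul_sum]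
    rw [← sum_u_mYUW qSY qWU y w]
    apply Finset.sum_le_sum
    intro u' _
    unfold hbPUW
    rw [if_pos h]
    rw [show mW qSY qWU w * (mWU qSY qWU w u' / mW qSY qWU w * hbPY qSY qWU y w u')
        = mWU qSY qWU w u' * hbPY qSY qWU y w u' * (mW qSY qWU w / mW qSY qWU w) by ring,
      div_self (ne_of_gt h), mul_one]
    unfold hbPY
    by_cases hwu : mWU qSY qWU w u' = 0
    · rw [hwu]
      simp [mYUW_nonneg qSY qWU y u' w]
    · rw [mul_div_assoc', mul_comm, mul_div_assoc, div_self hwu, mul_one]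
  · have hw : mW qSY qWU w = 0 := le_antisymm (not_lt.mp h) (mW_nonneg qSY qWU w)
    rw [hw, zero_mul]
    exact mYW_nonneg qSY qWU y w

end Construction

-- ===================== cluster-level computations =====================

section Cluster

open Finset

variable (qSY : FinPMF (S × Y)) (qWU : S → FinPMF (W × U))
variable (J2 : ℕ)

/-- distribution of one cluster of the codebook. -/
noncomputable def hbNu (c : W × (Fin J2 → U)) : ℝ :=
  mW qSY qWU c.1 * ∏ j, hbPUW qSY qWU c.1 (c.2 j)

lemma hbNu_nonneg (c) : 0 ≤ hbNu qSY qWU J2 c :=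
  mul_nonneg (mW_nonneg qSY qWU c.1)
    (Finset.prod_nonneg fun j _ => hbPUW_nonneg qSY qWU c.1 (c.2 j))

lemma hbRow_single (hU : Nonempty U) (w : W) (j' : Fin J2) (φ : U → ℝ) :
    (∑ uf : Fin J2 → U, (∏ j, hbPUW qSY qWU w (uf j)) * φ (uf j'))
      = ∑ u', hbPUW qSY qWU w u' * φ u' :=
  sum_prod_single (hbPUW qSY qWU w) (hbPUW_sum qSY qWU hU w) j' φ

lemma hbRow_pair (hU : Nonempty U) (w : W) {j0 j1 : Fin J2} (hne : j0 ≠ j1) (φ ψ : U → ℝ) :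
    (∑ uf : Fin J2 → U, (∏ j, hbPUW qSY qWU w (uf j)) * (φ (uf j0) * ψ (uf j1)))
      = (∑ u', hbPUW qSY qWU w u' * φ u') * (∑ u', hbPUW qSY qWU w u' * ψ u') :=
  sum_prod_pair (hbPUW qSY qWU w) (hbPUW_sum qSY qWU hU w) hne φ ψ

lemma hbNu_sum (hU : Nonempty U) : ∑ c : W × (Fin J2 → U), hbNu qSY qWU J2 c = 1 := by
  rw [Fintype.sum_prod_type]
  have h1 : ∀ w : W, (∑ uf : Fin J2 → U, hbNu qSY qWU J2 (w, uf)) = mW qSY qWU w := by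
    intro w
    unfold hbNu
    dsimp only
    rw [← Finset.mul_sum, sum_prod_const (hbPUW qSY qWU w) (hbPUW_sum qSY qWU hU w), mul_one]
  rw [Finset.sum_congr rfl fun w _ => h1 w]
  exact sum_mW qSY qWU

/-- a fresh cluster coordinate: expectation of `p(s|·,·)`. -/
lemma hbNu_ps_le (hU : Nonempty U) (s : S) (j' : Fin J2) :
    (∑ c : W × (Fin J2 → U), hbNu qSY qWU J2 c * hbPS qSY qWU s c.1 (c.2 j'))
      ≤ mS qSY s := by
  rw [Fintype.sum_prod_type]
  have h1 : ∀ w : W, (∑ uf : Fin J2 → U, hbNu qSY qWU J2 (w, uf) * hbPS qSY qWU s w (uf j'))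
      = mW qSY qWU w * (∑ u', hbPUW qSY qWU w u' * hbPS qSY qWU s w u') := by
    intro w
    calc ∑ uf : Fin J2 → U, hbNu qSY qWU J2 (w, uf) * hbPS qSY qWU s w (uf j')
        = ∑ uf : Fin J2 → U,
            mW qSY qWU w * ((∏ j, hbPUW qSY qWU w (uf j)) * hbPS qSY qWU s w (uf j')) := by
          apply Finset.sum_congr rfl
          intro uf _
          unfold hbNu
          dsimp only
          ring
      _ = mW qSY qWU w * ∑ uf : Fin J2 → U,
            (∏ j, hbPUW qSY qWU w (uf j)) * hbPS qSY qWU s w (uf j') := by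
          rw [← Finset.mul_sum]
      _ = mW qSY qWU w * (∑ u', hbPUW qSY qWU w u' * hbPS qSY qWU s w u') := by
          rw [hbRow_single qSY qWU J2 hU w j']
  rw [Finset.sum_congr rfl fun w _ => h1 w]
  rw [← sum_w_mSW qSY qWU s]
  exact Finset.sum_le_sum fun w _ => hbEU_S_le qSY qWU s w

/-- slice mass of a cluster. -/
lemma hbNu_slice (hU : Nonempty U) (j : Fin J2) (w : W) (u : U) :
    (∑ c : W × (Fin J2 → U), hbNu qSY qWU J2 c * ind ((c.1, c.2 j) = (w, u)))
      = mW qSY qWU w * hbPUW qSY qWU w u := by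
  rw [Fintype.sum_prod_type]
  have h1 : ∀ w' : W, (∑ uf : Fin J2 → U, hbNu qSY qWU J2 (w', uf) * ind ((w', uf j) = (w, u)))
      = ind (w' = w) * (mW qSY qWU w' * hbPUW qSY qWU w' u) := by
    intro w'
    calc ∑ uf : Fin J2 → U, hbNu qSY qWU J2 (w', uf) * ind ((w', uf j) = (w, u))
        = ∑ uf : Fin J2 → U, ind (w' = w) * mW qSY qWU w' *
            ((∏ j', hbPUW qSY qWU w' (uf j')) * ind (uf j = u)) := by
          apply Finset.sum_congr rfl
          intro uf _
          unfold hbNu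
          dsimp only
          rw [ind_pair]
          ring
      _ = ind (w' = w) * mW qSY qWU w' *
            ∑ uf : Fin J2 → U, (∏ j', hbPUW qSY qWU w' (uf j')) * ind (uf j = u) := by
          rw [← Finset.mul_sum]
      _ = ind (w' = w) * mW qSY qWU w' * (∑ u', hbPUW qSY qWU w' u' * ind (u' = u)) := by
          rw [hbRow_single qSY qWU J2 hU w' j (fun v => ind (v = u))]
      _ = ind (w' = w) * (mW qSY qWU w' * hbPUW qSY qWU w' u) := by
          rw [sum_mul_ind_eq u (fun u' => hbPUW qSY qWU w' u')]
          ring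
  rw [Finset.sum_congr rfl fun w' _ => h1 w']
  exact sum_ind_eq' w (fun w' => mW qSY qWU w' * hbPUW qSY qWU w' u)

/-- slice with the distinguished coordinate itself. -/
lemma hbNu_slice_diag (hU : Nonempty U) (j : Fin J2) (w : W) (u : U) (g : W → U → ℝ) :
    (∑ c : W × (Fin J2 → U), hbNu qSY qWU J2 c * (ind ((c.1, c.2 j) = (w, u)) * g c.1 (c.2 j)))
      = mW qSY qWU w * hbPUW qSY qWU w u * g w u := by
  rw [Fintype.sum_prod_type]
  have h1 : ∀ w' : W,
      (∑ uf : Fin J2 → U, hbNu qSY qWU J2 (w', uf) * (ind ((w', uf j) = (w, u)) * g w' (uf j)))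
      = ind (w' = w) * (mW qSY qWU w' * (hbPUW qSY qWU w' u * g w' u)) := by
    intro w'
    calc ∑ uf : Fin J2 → U, hbNu qSY qWU J2 (w', uf) * (ind ((w', uf j) = (w, u)) * g w' (uf j))
        = ∑ uf : Fin J2 → U, ind (w' = w) * mW qSY qWU w' *
            ((∏ j', hbPUW qSY qWU w' (uf j')) * (ind (uf j = u) * g w' (uf j))) := by
          apply Finset.sum_congr rfl
          intro uf _
          unfold hbNu
          dsimp only
          rw [ind_pair]
          ring
      _ = ind (w' = w) * mW qSY qWU w' *
            ∑ uf : Fin J2 → U, (∏ j', hbPUW qSY qWU w' (uf j')) * (ind (uf j = u) * g w' (uf j)) := by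
          rw [← Finset.mul_sum]
      _ = ind (w' = w) * mW qSY qWU w' *
            (∑ u', hbPUW qSY qWU w' u' * (ind (u' = u) * g w' u')) := by
          rw [hbRow_single qSY qWU J2 hU w' j (fun v => ind (v = u) * g w' v)]
      _ = ind (w' = w) * (mW qSY qWU w' * (hbPUW qSY qWU w' u * g w' u)) := by
          have : (∑ u', hbPUW qSY qWU w' u' * (ind (u' = u) * g w' u'))
              = hbPUW qSY qWU w' u * g w' u := by
            rw [Finset.sum_congr rfl fun u' _ => by
              rw [show hbPUW qSY qWU w' u' * (ind (u' = u) * g w' u')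
                = (hbPUW qSY qWU w' u' * g w' u') * ind (u' = u) by ring]]
            exact sum_mul_ind_eq u (fun u' => hbPUW qSY qWU w' u' * g w' u')
          rw [this]
          ring
  rw [Finset.sum_congr rfl fun w' _ => h1 w']
  rw [sum_ind_eq' w (fun w' => mW qSY qWU w' * (hbPUW qSY qWU w' u * g w' u))]
  ring

/-- slice with a different coordinate `j' ≠ j`, generic version. -/
lemma hbNu_slice_off (hU : Nonempty U) {j j' : Fin J2} (hne : j ≠ j') (w : W) (u : U)
    (g : W → U → ℝ) :
    (∑ c : W × (Fin J2 → U), hbNu qSY qWU J2 c * (ind ((c.1, c.2 j) = (w, u)) * g c.1 (c.2 j')))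
      = mW qSY qWU w * (hbPUW qSY qWU w u * (∑ u', hbPUW qSY qWU w u' * g w u')) := by
  rw [Fintype.sum_prod_type]
  have h1 : ∀ w' : W,
      (∑ uf : Fin J2 → U, hbNu qSY qWU J2 (w', uf) * (ind ((w', uf j) = (w, u)) * g w' (uf j')))
      = ind (w' = w) * (mW qSY qWU w' *
          (hbPUW qSY qWU w' u * (∑ u', hbPUW qSY qWU w' u' * g w' u'))) := by
    intro w'
    calc ∑ uf : Fin J2 → U, hbNu qSY qWU J2 (w', uf) * (ind ((w', uf j) = (w, u)) * g w' (uf j'))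
        = ∑ uf : Fin J2 → U, ind (w' = w) * mW qSY qWU w' *
            ((∏ t, hbPUW qSY qWU w' (uf t)) * (ind (uf j = u) * g w' (uf j'))) := by
          apply Finset.sum_congr rfl
          intro uf _
          unfold hbNu
          dsimp only
          rw [ind_pair]
          ring
      _ = ind (w' = w) * mW qSY qWU w' *
            ∑ uf : Fin J2 → U,
              (∏ t, hbPUW qSY qWU w' (uf t)) * (ind (uf j = u) * g w' (uf j')) := by
          rw [← Finset.mul_sum]
      _ = ind (w' = w) * mW qSY qWU w' *
            ((∑ u', hbPUW qSY qWU w' u' * ind (u' = u)) * (∑ u', hbPUW qSY qWU w' u' * g w' u')) := by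
          rw [hbRow_pair qSY qWU J2 hU w' hne (fun v => ind (v = u)) (fun v => g w' v)]
      _ = ind (w' = w) * (mW qSY qWU w' *
            (hbPUW qSY qWU w' u * (∑ u', hbPUW qSY qWU w' u' * g w' u'))) := by
          rw [sum_mul_ind_eq u (fun u' => hbPUW qSY qWU w' u')]
          ring
  rw [Finset.sum_congr rfl fun w' _ => h1 w']
  exact sum_ind_eq' w (fun w' => mW qSY qWU w' *
    (hbPUW qSY qWU w' u * (∑ u', hbPUW qSY qWU w' u' * g w' u')))

end Cluster

-- ===================== codebook-level computations =====================

section Codebook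

open Finset

variable (qSY : FinPMF (S × Y)) (qWU : S → FinPMF (W × U))
variable (M1 M2 J2 : ℕ)

lemma sum_inv_M2 (hM2 : 0 < M2) : ∑ _k : Fin M2, (M2:ℝ)⁻¹ = 1 := by
  rw [Finset.sum_const, Finset.card_univ, Fintype.card_fin, nsmul_eq_mul, mul_inv_cancel₀]
  exact_mod_cast Nat.pos_iff_ne_zero.mp hM2

/-- the codebook distribution. -/
noncomputable def hbMu (θ : (Fin M1 → W × (Fin J2 → U)) × (Fin J2 → Fin M2)) : ℝ :=
  (∏ i', hbNu qSY qWU J2 (θ.1 i')) * ∏ _t : Fin J2, (M2:ℝ)⁻¹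

lemma hbMu_nonneg (θ) : 0 ≤ hbMu qSY qWU M1 M2 J2 θ := by
  unfold hbMu
  have h1 : (0:ℝ) ≤ ∏ i', hbNu qSY qWU J2 (θ.1 i') :=
    Finset.prod_nonneg fun i' _ => hbNu_nonneg qSY qWU J2 (θ.1 i')
  have h2 : (0:ℝ) ≤ ∏ _t : Fin J2, (M2:ℝ)⁻¹ :=
    Finset.prod_nonneg fun _ _ => by positivity
  exact mul_nonneg h1 h2

lemma sum_prod_invM2 (hM2 : 0 < M2) :
    ∑ _b : Fin J2 → Fin M2, (∏ _t : Fin J2, (M2:ℝ)⁻¹) = 1 := by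
  have h := sum_prod_const (ι := Fin J2) (fun _ : Fin M2 => (M2:ℝ)⁻¹) (sum_inv_M2 M2 hM2)
  simpa using h

/-- eliminate the bins component when the integrand does not depend on it. -/
lemma hbB_elim (hM2 : 0 < M2) (F : (Fin M1 → W × (Fin J2 → U)) → ℝ) :
    (∑ θ : (Fin M1 → W × (Fin J2 → U)) × (Fin J2 → Fin M2), hbMu qSY qWU M1 M2 J2 θ * F θ.1)
      = ∑ cf : Fin M1 → W × (Fin J2 → U), (∏ i', hbNu qSY qWU J2 (cf i')) * F cf := by
  rw [Fintype.sum_prod_type]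
  apply Finset.sum_congr rfl
  intro cf _
  calc ∑ b : Fin J2 → Fin M2, hbMu qSY qWU M1 M2 J2 (cf, b) * F (cf, b).1
      = ∑ b : Fin J2 → Fin M2,
          ((∏ i', hbNu qSY qWU J2 (cf i')) * F cf) * (∏ _t : Fin J2, (M2:ℝ)⁻¹) := by
        apply Finset.sum_congr rfl
        intro b _
        unfold hbMu
        dsimp only
        ring
    _ = ((∏ i', hbNu qSY qWU J2 (cf i')) * F cf) * ∑ _b : Fin J2 → Fin M2, (∏ _t : Fin J2, (M2:ℝ)⁻¹) := by
        rw [← Finset.mul_sum]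
    _ = (∏ i', hbNu qSY qWU J2 (cf i')) * F cf := by
        rw [sum_prod_invM2 M2 J2 hM2, mul_one]

lemma hbMu_sum (hU : Nonempty U) (hM2 : 0 < M2) :
    ∑ θ : (Fin M1 → W × (Fin J2 → U)) × (Fin J2 → Fin M2), hbMu qSY qWU M1 M2 J2 θ = 1 := by
  have h := hbB_elim qSY qWU M1 M2 J2 hM2 (fun _ => (1:ℝ))
  simp only [mul_one] at h
  rw [h]
  exact sum_prod_const (hbNu qSY qWU J2) (hbNu_sum qSY qWU J2 hU)

/-- probability that two distinct indices fall in the same bin. -/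
lemma hbBins (hM2 : 0 < M2) {j j' : Fin J2} (hne : j' ≠ j) :
    (∑ b : Fin J2 → Fin M2, (∏ _t : Fin J2, (M2:ℝ)⁻¹) * ind (b j' = b j)) = (M2:ℝ)⁻¹ := by
  have hpoint : ∀ b : Fin J2 → Fin M2,
      ind (b j' = b j) = ∑ k : Fin M2, ind (b j = k) * ind (b j' = k) := by
    intro b
    by_cases h : b j' = b j
    · rw [ind_true h, h]
      have h1 : ∀ k : Fin M2, ind (b j = k) * ind (b j = k) = ind (b j = k) := by
        intro k
        by_cases hk : b j = k <;> simp [ind_true, ind_false, hk]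
      rw [Finset.sum_congr rfl fun k _ => h1 k]
      have h2 := sum_ind_eq (b j) (fun _ : Fin M2 => (1:ℝ))
      simp only [mul_one] at h2
      rw [h2]
    · rw [ind_false h]
      symm
      apply Finset.sum_eq_zero
      intro k _
      by_cases h1 : b j = k
      · have h2 : ¬ b j' = k := fun hc => h (hc.trans h1.symm)
        rw [ind_false h2, mul_zero]
      · rw [ind_false h1, zero_mul]
  calc ∑ b : Fin J2 → Fin M2, (∏ _t : Fin J2, (M2:ℝ)⁻¹) * ind (b j' = b j)
      = ∑ b : Fin J2 → Fin M2, ∑ k : Fin M2,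
          (∏ _t : Fin J2, (M2:ℝ)⁻¹) * (ind (b j = k) * ind (b j' = k)) := by
        apply Finset.sum_congr rfl
        intro b _
        rw [hpoint b, Finset.mul_sum]
    _ = ∑ k : Fin M2, ∑ b : Fin J2 → Fin M2,
          (∏ _t : Fin J2, (M2:ℝ)⁻¹) * (ind (b j = k) * ind (b j' = k)) := Finset.sum_comm
    _ = ∑ _k : Fin M2, (M2:ℝ)⁻¹ * (M2:ℝ)⁻¹ := by
        apply Finset.sum_congr rfl
        intro k _
        have h := sum_prod_pair (ι := Fin J2) (fun _ : Fin M2 => (M2:ℝ)⁻¹)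
          (sum_inv_M2 M2 hM2) (Ne.symm hne) (fun v => ind (v = k)) (fun v => ind (v = k))
        rw [sum_mul_ind_eq k (fun _ => (M2:ℝ)⁻¹)] at h
        simpa using h
    _ = (M2:ℝ)⁻¹ := by
        rw [Finset.sum_const, Finset.card_univ, Fintype.card_fin, nsmul_eq_mul]
        have : (M2:ℝ) ≠ 0 := by exact_mod_cast Nat.pos_iff_ne_zero.mp hM2
        field_simp
end Codebook

-- ===================== slice expectations of the denominators =====================

section Slice

open Finset

variable (qSY : FinPMF (S × Y)) (qWU : S → FinPMF (W × U))
variable (M1 M2 J2 : ℕ)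

/-- encoder normalization. -/
noncomputable def hbDenE (cf : Fin M1 → W × (Fin J2 → U)) (s : S) : ℝ :=
  ∑ i' : Fin M1, ∑ j' : Fin J2, hbPS qSY qWU s (cf i').1 ((cf i').2 j')

/-- decoder-2 normalization. -/
noncomputable def hbDenD (θ : (Fin M1 → W × (Fin J2 → U)) × (Fin J2 → Fin M2))
    (i : Fin M1) (k : Fin M2) (y : Y) : ℝ :=
  ∑ j' : Fin J2, ind (θ.2 j' = k) * hbPY qSY qWU y (θ.1 i).1 ((θ.1 i).2 j')

lemma hbDenE_nonneg (cf s) : 0 ≤ hbDenE qSY qWU M1 J2 cf s :=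
  Finset.sum_nonneg fun i' _ => Finset.sum_nonneg fun j' _ => hbPS_nonneg qSY qWU _ _ _

lemma hbDenD_nonneg (θ i k y) : 0 ≤ hbDenD qSY qWU M1 M2 J2 θ i k y :=
  Finset.sum_nonneg fun j' _ => mul_nonneg (ind_nonneg' _) (hbPY_nonneg qSY qWU _ _ _)

lemma sum_le_special {n : ℕ} (j : Fin n) (t : Fin n → ℝ) (a b : ℝ)
    (hj : t j ≤ a) (hoff : ∀ j', j' ≠ j → t j' ≤ b) (hb : 0 ≤ b) :
    (∑ j', t j') ≤ a + (n:ℝ) * b := by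
  rw [← Finset.add_sum_erase Finset.univ t (Finset.mem_univ j)]
  have h1 : (∑ j' ∈ Finset.univ.erase j, t j') ≤ ∑ _j' ∈ Finset.univ.erase j, b :=
    Finset.sum_le_sum fun j' hj' => hoff j' (Finset.mem_erase.mp hj').1
  have h2 : (∑ _j' ∈ Finset.univ.erase j, b) ≤ (n:ℝ) * b := by
    rw [Finset.sum_const, nsmul_eq_mul]
    apply mul_le_mul_of_nonneg_right _ hb
    have : (Finset.univ.erase j).card ≤ n := by
      calc (Finset.univ.erase j).card ≤ Finset.univ.card := Finset.card_erase_le ..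
        _ = n := by rw [Finset.card_univ, Fintype.card_fin]
    exact_mod_cast this
  linarith

lemma hbOff_bound_S (s : S) (w : W) (u : U) :
    mW qSY qWU w * (hbPUW qSY qWU w u * (∑ u', hbPUW qSY qWU w u' * hbPS qSY qWU s w u'))
      ≤ (mW qSY qWU w * hbPUW qSY qWU w u) * (mSW qSY qWU s w / mW qSY qWU w) := by
  by_cases h : 0 < mW qSY qWU w
  · have h1 : (mW qSY qWU w * hbPUW qSY qWU w u) * (mSW qSY qWU s w / mW qSY qWU w)
        = hbPUW qSY qWU w u * mSW qSY qWU s w := by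
      field_simp
    rw [h1, show mW qSY qWU w * (hbPUW qSY qWU w u * (∑ u', hbPUW qSY qWU w u' * hbPS qSY qWU s w u'))
        = hbPUW qSY qWU w u * (mW qSY qWU w * (∑ u', hbPUW qSY qWU w u' * hbPS qSY qWU s w u')) by ring]
    exact mul_le_mul_of_nonneg_left (hbEU_S_le qSY qWU s w) (hbPUW_nonneg qSY qWU w u)
  · have hw : mW qSY qWU w = 0 := le_antisymm (not_lt.mp h) (mW_nonneg qSY qWU w)
    rw [hw]
    simp

lemma hbOff_bound_Y (y : Y) (w : W) (u : U) :
    mW qSY qWU w * (hbPUW qSY qWU w u * (∑ u', hbPUW qSY qWU w u' * hbPY qSY qWU y w u'))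
      ≤ (mW qSY qWU w * hbPUW qSY qWU w u) * (mYW qSY qWU y w / mW qSY qWU w) := by
  by_cases h : 0 < mW qSY qWU w
  · have h1 : (mW qSY qWU w * hbPUW qSY qWU w u) * (mYW qSY qWU y w / mW qSY qWU w)
        = hbPUW qSY qWU w u * mYW qSY qWU y w := by
      field_simp
    rw [h1, show mW qSY qWU w * (hbPUW qSY qWU w u * (∑ u', hbPUW qSY qWU w u' * hbPY qSY qWU y w u'))
        = hbPUW qSY qWU w u * (mW qSY qWU w * (∑ u', hbPUW qSY qWU w u' * hbPY qSY qWU y w u')) by ring]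
    exact mul_le_mul_of_nonneg_left (hbEU_Y_le qSY qWU y w) (hbPUW_nonneg qSY qWU w u)
  · have hw : mW qSY qWU w = 0 := le_antisymm (not_lt.mp h) (mW_nonneg qSY qWU w)
    rw [hw]
    simp

/-- slice mass at the codebook level. -/
lemma hbTheta_mass (hU : Nonempty U) (hM2 : 0 < M2) (i : Fin M1) (j : Fin J2) (w : W) (u : U) :
    (∑ θ : (Fin M1 → W × (Fin J2 → U)) × (Fin J2 → Fin M2),
        hbMu qSY qWU M1 M2 J2 θ * ind (((θ.1 i).1, (θ.1 i).2 j) = (w, u)))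
      = mW qSY qWU w * hbPUW qSY qWU w u := by
  rw [hbB_elim qSY qWU M1 M2 J2 hM2 (fun cf => ind (((cf i).1, (cf i).2 j) = (w, u))),
    sum_prod_single (hbNu qSY qWU J2) (hbNu_sum qSY qWU J2 hU) i
      (fun c => ind ((c.1, c.2 j) = (w, u)))]
  exact hbNu_slice qSY qWU J2 hU j w u

/-- slice expectation of the encoder denominator. -/
lemma hbTheta_E (hU : Nonempty U) (hM2 : 0 < M2) (s : S) (i : Fin M1) (j : Fin J2)
    (w : W) (u : U) :
    (∑ θ : (Fin M1 → W × (Fin J2 → U)) × (Fin J2 → Fin M2),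
        hbMu qSY qWU M1 M2 J2 θ *
          (ind (((θ.1 i).1, (θ.1 i).2 j) = (w, u)) * hbDenE qSY qWU M1 J2 θ.1 s))
      ≤ (mW qSY qWU w * hbPUW qSY qWU w u) *
          (hbPS qSY qWU s w u + (J2:ℝ) * (mSW qSY qWU s w / mW qSY qWU w)
            + (M1:ℝ) * ((J2:ℝ) * mS qSY s)) := by
  rw [hbB_elim qSY qWU M1 M2 J2 hM2
    (fun cf => ind (((cf i).1, (cf i).2 j) = (w, u)) * hbDenE qSY qWU M1 J2 cf s)]
  set massC := mW qSY qWU w * hbPUW qSY qWU w u with hmassC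
  have hmass_nonneg : 0 ≤ massC :=
    mul_nonneg (mW_nonneg qSY qWU w) (hbPUW_nonneg qSY qWU w u)
  -- reorganize: sum over i' of slice expectations
  have hsplit : (∑ cf : Fin M1 → W × (Fin J2 → U), (∏ i', hbNu qSY qWU J2 (cf i')) *
        (ind (((cf i).1, (cf i).2 j) = (w, u)) * hbDenE qSY qWU M1 J2 cf s))
      = ∑ i' : Fin M1, ∑ cf : Fin M1 → W × (Fin J2 → U), (∏ t, hbNu qSY qWU J2 (cf t)) *
          (ind (((cf i).1, (cf i).2 j) = (w, u)) *
            (∑ j' : Fin J2, hbPS qSY qWU s (cf i').1 ((cf i').2 j'))) := by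
    rw [Finset.sum_comm]
    apply Finset.sum_congr rfl
    intro cf _
    unfold hbDenE
    rw [← Finset.mul_sum, ← Finset.mul_sum]
  rw [hsplit]
  -- bound each i'
  have hbound : ∀ i' : Fin M1, i' ≠ i →
      (∑ cf : Fin M1 → W × (Fin J2 → U), (∏ t, hbNu qSY qWU J2 (cf t)) *
        (ind (((cf i).1, (cf i).2 j) = (w, u)) *
          (∑ j' : Fin J2, hbPS qSY qWU s (cf i').1 ((cf i').2 j'))))
      ≤ massC * ((J2:ℝ) * mS qSY s) := by
    intro i' hne
    have hpair := sum_prod_pair (hbNu qSY qWU J2) (hbNu_sum qSY qWU J2 hU) (Ne.symm hne)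
      (fun c => ind ((c.1, c.2 j) = (w, u)))
      (fun c => ∑ j' : Fin J2, hbPS qSY qWU s c.1 (c.2 j'))
    rw [hpair, hbNu_slice qSY qWU J2 hU j w u]
    apply mul_le_mul_of_nonneg_left _ hmass_nonneg
    have h1 : (∑ c : W × (Fin J2 → U), hbNu qSY qWU J2 c *
        ∑ j' : Fin J2, hbPS qSY qWU s c.1 (c.2 j'))
        = ∑ j' : Fin J2, ∑ c : W × (Fin J2 → U), hbNu qSY qWU J2 c * hbPS qSY qWU s c.1 (c.2 j') := by
      rw [Finset.sum_comm]
      apply Finset.sum_congr rfl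
      intro c _
      rw [Finset.mul_sum]
    rw [h1]
    calc (∑ j' : Fin J2, ∑ c : W × (Fin J2 → U), hbNu qSY qWU J2 c * hbPS qSY qWU s c.1 (c.2 j'))
        ≤ ∑ _j' : Fin J2, mS qSY s :=
          Finset.sum_le_sum fun j' _ => hbNu_ps_le qSY qWU J2 hU s j'
      _ = (J2:ℝ) * mS qSY s := by
          rw [Finset.sum_const, Finset.card_univ, Fintype.card_fin, nsmul_eq_mul]
  have hdiag : (∑ cf : Fin M1 → W × (Fin J2 → U), (∏ t, hbNu qSY qWU J2 (cf t)) *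
        (ind (((cf i).1, (cf i).2 j) = (w, u)) *
          (∑ j' : Fin J2, hbPS qSY qWU s (cf i).1 ((cf i).2 j'))))
      ≤ massC * hbPS qSY qWU s w u + (J2:ℝ) * (massC * (mSW qSY qWU s w / mW qSY qWU w)) := by
    rw [sum_prod_single (hbNu qSY qWU J2) (hbNu_sum qSY qWU J2 hU) i
      (fun c => ind ((c.1, c.2 j) = (w, u)) * (∑ j' : Fin J2, hbPS qSY qWU s c.1 (c.2 j')))]
    have h1 : (∑ c : W × (Fin J2 → U), hbNu qSY qWU J2 c *
        (ind ((c.1, c.2 j) = (w, u)) * ∑ j' : Fin J2, hbPS qSY qWU s c.1 (c.2 j')))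
        = ∑ j' : Fin J2, ∑ c : W × (Fin J2 → U), hbNu qSY qWU J2 c *
            (ind ((c.1, c.2 j) = (w, u)) * hbPS qSY qWU s c.1 (c.2 j')) := by
      rw [Finset.sum_comm]
      apply Finset.sum_congr rfl
      intro c _
      rw [← Finset.mul_sum, ← Finset.mul_sum]
    rw [h1]
    have hdj : (∑ c : W × (Fin J2 → U), hbNu qSY qWU J2 c *
          (ind ((c.1, c.2 j) = (w, u)) * hbPS qSY qWU s c.1 (c.2 j)))
        ≤ massC * hbPS qSY qWU s w u := by
      rw [hbNu_slice_diag qSY qWU J2 hU j w u (fun w' u' => hbPS qSY qWU s w' u')]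
    have hoj : ∀ j' : Fin J2, j' ≠ j →
        (∑ c : W × (Fin J2 → U), hbNu qSY qWU J2 c *
          (ind ((c.1, c.2 j) = (w, u)) * hbPS qSY qWU s c.1 (c.2 j')))
        ≤ massC * (mSW qSY qWU s w / mW qSY qWU w) := by
      intro j' hne'
      rw [hbNu_slice_off qSY qWU J2 hU (Ne.symm hne') w u (fun w' u' => hbPS qSY qWU s w' u')]
      exact hbOff_bound_S qSY qWU s w u
    exact sum_le_special j _ _ _ hdj hoj
      (mul_nonneg hmass_nonneg
        (div_nonneg (mSW_nonneg qSY qWU s w) (mW_nonneg qSY qWU w)))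
  have h3 : (∑ i' : Fin M1, ∑ cf : Fin M1 → W × (Fin J2 → U),
        (∏ t, hbNu qSY qWU J2 (cf t)) *
          (ind (((cf i).1, (cf i).2 j) = (w, u)) *
            (∑ j' : Fin J2, hbPS qSY qWU s (cf i').1 ((cf i').2 j'))))
      ≤ (massC * hbPS qSY qWU s w u + (J2:ℝ) * (massC * (mSW qSY qWU s w / mW qSY qWU w)))
        + (M1:ℝ) * (massC * ((J2:ℝ) * mS qSY s)) :=
    sum_le_special i _ _ _ hdiag hbound
      (mul_nonneg hmass_nonneg (mul_nonneg (by positivity) (mS_nonneg qSY s)))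
  refine le_trans h3 (le_of_eq ?_)
  ring

/-- slice expectation of the decoder denominator. -/
lemma hbTheta_D (hU : Nonempty U) (hM2 : 0 < M2) (y : Y) (i : Fin M1) (j : Fin J2)
    (w : W) (u : U) :
    (∑ θ : (Fin M1 → W × (Fin J2 → U)) × (Fin J2 → Fin M2),
        hbMu qSY qWU M1 M2 J2 θ *
          (ind (((θ.1 i).1, (θ.1 i).2 j) = (w, u)) * hbDenD qSY qWU M1 M2 J2 θ i (θ.2 j) y))
      ≤ (mW qSY qWU w * hbPUW qSY qWU w u) *
          (hbPY qSY qWU y w u + (J2:ℝ) * ((M2:ℝ)⁻¹ * (mYW qSY qWU y w / mW qSY qWU w))) := by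
  set massC := mW qSY qWU w * hbPUW qSY qWU w u with hmassC
  have hmass_nonneg : 0 ≤ massC :=
    mul_nonneg (mW_nonneg qSY qWU w) (hbPUW_nonneg qSY qWU w u)
  have hsplit : (∑ θ : (Fin M1 → W × (Fin J2 → U)) × (Fin J2 → Fin M2),
        hbMu qSY qWU M1 M2 J2 θ *
          (ind (((θ.1 i).1, (θ.1 i).2 j) = (w, u)) * hbDenD qSY qWU M1 M2 J2 θ i (θ.2 j) y))
      = ∑ j' : Fin J2, ∑ θ : (Fin M1 → W × (Fin J2 → U)) × (Fin J2 → Fin M2),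
          hbMu qSY qWU M1 M2 J2 θ *
            (ind (((θ.1 i).1, (θ.1 i).2 j) = (w, u)) *
              (ind (θ.2 j' = θ.2 j) * hbPY qSY qWU y (θ.1 i).1 ((θ.1 i).2 j'))) := by
    rw [Finset.sum_comm]
    apply Finset.sum_congr rfl
    intro θ _
    unfold hbDenD
    rw [← Finset.mul_sum, ← Finset.mul_sum]
  rw [hsplit]
  -- a single j' term, as a product over the two independent components
  have hterm : ∀ j' : Fin J2,
      (∑ θ : (Fin M1 → W × (Fin J2 → U)) × (Fin J2 → Fin M2),
        hbMu qSY qWU M1 M2 J2 θ *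
          (ind (((θ.1 i).1, (θ.1 i).2 j) = (w, u)) *
            (ind (θ.2 j' = θ.2 j) * hbPY qSY qWU y (θ.1 i).1 ((θ.1 i).2 j'))))
      = (∑ cf : Fin M1 → W × (Fin J2 → U), (∏ t, hbNu qSY qWU J2 (cf t)) *
            (ind (((cf i).1, (cf i).2 j) = (w, u)) * hbPY qSY qWU y (cf i).1 ((cf i).2 j')))
        * (∑ b : Fin J2 → Fin M2, (∏ _t : Fin J2, (M2:ℝ)⁻¹) * ind (b j' = b j)) := by
    intro j'
    rw [Fintype.sum_prod_type, Finset.sum_mul_sum]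
    apply Finset.sum_congr rfl
    intro cf _
    apply Finset.sum_congr rfl
    intro b _
    unfold hbMu
    dsimp only
    ring
  rw [Finset.sum_congr rfl fun j' _ => hterm j']
  -- bound the terms
  have hdj : (∑ cf : Fin M1 → W × (Fin J2 → U), (∏ t, hbNu qSY qWU J2 (cf t)) *
        (ind (((cf i).1, (cf i).2 j) = (w, u)) * hbPY qSY qWU y (cf i).1 ((cf i).2 j)))
        * (∑ b : Fin J2 → Fin M2, (∏ _t : Fin J2, (M2:ℝ)⁻¹) * ind (b j = b j))
      ≤ massC * hbPY qSY qWU y w u := by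
    have h1 : (∑ b : Fin J2 → Fin M2, (∏ _t : Fin J2, (M2:ℝ)⁻¹) * ind (b j = b j)) = 1 := by
      rw [Finset.sum_congr rfl fun b _ => by rw [ind_true rfl, mul_one]]
      exact sum_prod_invM2 M2 J2 hM2
    rw [h1, mul_one,
      sum_prod_single (hbNu qSY qWU J2) (hbNu_sum qSY qWU J2 hU) i
        (fun c => ind ((c.1, c.2 j) = (w, u)) * hbPY qSY qWU y c.1 (c.2 j)),
      hbNu_slice_diag qSY qWU J2 hU j w u (fun w' u' => hbPY qSY qWU y w' u')]
  have hoj : ∀ j' : Fin J2, j' ≠ j →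
      (∑ cf : Fin M1 → W × (Fin J2 → U), (∏ t, hbNu qSY qWU J2 (cf t)) *
        (ind (((cf i).1, (cf i).2 j) = (w, u)) * hbPY qSY qWU y (cf i).1 ((cf i).2 j')))
        * (∑ b : Fin J2 → Fin M2, (∏ _t : Fin J2, (M2:ℝ)⁻¹) * ind (b j' = b j))
      ≤ (M2:ℝ)⁻¹ * (massC * (mYW qSY qWU y w / mW qSY qWU w)) := by
    intro j' hne'
    rw [hbBins M2 J2 hM2 hne',
      sum_prod_single (hbNu qSY qWU J2) (hbNu_sum qSY qWU J2 hU) i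
        (fun c => ind ((c.1, c.2 j) = (w, u)) * hbPY qSY qWU y c.1 (c.2 j')),
      hbNu_slice_off qSY qWU J2 hU (Ne.symm hne') w u (fun w' u' => hbPY qSY qWU y w' u'),
      mul_comm]
    apply mul_le_mul_of_nonneg_left _ (by positivity)
    exact hbOff_bound_Y qSY qWU y w u
  have h3 := sum_le_special j _ _ _ hdj hoj
    (mul_nonneg (by positivity)
      (mul_nonneg hmass_nonneg
        (div_nonneg (mYW_nonneg qSY qWU y w) (mW_nonneg qSY qWU w))))
  refine le_trans h3 (le_of_eq ?_)
  ring

end Slice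

-- ===================== the slice lower bound =====================

section SliceLB

open Finset

variable (qSY : FinPMF (S × Y)) (qWU : S → FinPMF (W × U))
variable (M1 M2 J2 : ℕ)

set_option maxHeartbeats 2000000 in
lemma hbSliceCore (hU : Nonempty U) (hM2 : 0 < M2) (s : S) (y : Y)
    (i : Fin M1) (j : Fin J2) (w : W) (u : U) :
    hbPS qSY qWU s w u * hbPY qSY qWU y w u *
      ((mW qSY qWU w * hbPUW qSY qWU w u) /
        ((hbPS qSY qWU s w u + (J2:ℝ) * (mSW qSY qWU s w / mW qSY qWU w)
            + (M1:ℝ) * ((J2:ℝ) * mS qSY s)) *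
         (hbPY qSY qWU y w u + (J2:ℝ) * ((M2:ℝ)⁻¹ * (mYW qSY qWU y w / mW qSY qWU w)))))
    ≤ ∑ θ : (Fin M1 → W × (Fin J2 → U)) × (Fin J2 → Fin M2),
        hbMu qSY qWU M1 M2 J2 θ * (ind (((θ.1 i).1, (θ.1 i).2 j) = (w, u)) *
          ((hbPS qSY qWU s w u / hbDenE qSY qWU M1 J2 θ.1 s) *
           (hbPY qSY qWU y w u / hbDenD qSY qWU M1 M2 J2 θ i (θ.2 j) y))) := by
  set PS := hbPS qSY qWU s w u with hPSdef
  set PYv := hbPY qSY qWU y w u with hPYdef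
  set massC := mW qSY qWU w * hbPUW qSY qWU w u with hmassCdef
  set pbar := PS + (J2:ℝ) * (mSW qSY qWU s w / mW qSY qWU w)
      + (M1:ℝ) * ((J2:ℝ) * mS qSY s) with hpbardef
  set qbar := PYv + (J2:ℝ) * ((M2:ℝ)⁻¹ * (mYW qSY qWU y w / mW qSY qWU w)) with hqbardef
  have hRHS_nonneg : (0:ℝ) ≤ ∑ θ : (Fin M1 → W × (Fin J2 → U)) × (Fin J2 → Fin M2),
      hbMu qSY qWU M1 M2 J2 θ * (ind (((θ.1 i).1, (θ.1 i).2 j) = (w, u)) *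
        ((PS / hbDenE qSY qWU M1 J2 θ.1 s) *
         (PYv / hbDenD qSY qWU M1 M2 J2 θ i (θ.2 j) y))) := by
    apply Finset.sum_nonneg
    intro θ _
    apply mul_nonneg (hbMu_nonneg qSY qWU M1 M2 J2 θ)
    apply mul_nonneg (ind_nonneg' _)
    apply mul_nonneg
    · exact div_nonneg (hbPS_nonneg qSY qWU s w u) (hbDenE_nonneg qSY qWU M1 J2 θ.1 s)
    · exact div_nonneg (hbPY_nonneg qSY qWU y w u) (hbDenD_nonneg qSY qWU M1 M2 J2 θ i (θ.2 j) y)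
  by_cases hPS : 0 < PS
  swap
  · have h0 : PS = 0 := le_antisymm (not_lt.mp hPS) (hbPS_nonneg qSY qWU s w u)
    calc PS * PYv * (massC / (pbar * qbar)) = 0 := by rw [h0]; ring
      _ ≤ _ := hRHS_nonneg
  by_cases hPY : 0 < PYv
  swap
  · have h0 : PYv = 0 := le_antisymm (not_lt.mp hPY) (hbPY_nonneg qSY qWU y w u)
    calc PS * PYv * (massC / (pbar * qbar)) = 0 := by rw [h0]; ring
      _ ≤ _ := hRHS_nonneg
  -- main case
  have haux1 : (0:ℝ) ≤ (J2:ℝ) * (mSW qSY qWU s w / mW qSY qWU w) :=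
    mul_nonneg (by positivity) (div_nonneg (mSW_nonneg qSY qWU s w) (mW_nonneg qSY qWU w))
  have haux2 : (0:ℝ) ≤ (M1:ℝ) * ((J2:ℝ) * mS qSY s) :=
    mul_nonneg (by positivity) (mul_nonneg (by positivity) (mS_nonneg qSY s))
  have haux3 : (0:ℝ) ≤ (J2:ℝ) * ((M2:ℝ)⁻¹ * (mYW qSY qWU y w / mW qSY qWU w)) :=
    mul_nonneg (by positivity) (mul_nonneg (by positivity)
      (div_nonneg (mYW_nonneg qSY qWU y w) (mW_nonneg qSY qWU w)))
  have hpbar : 0 < pbar := by rw [hpbardef]; linarith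
  have hqbar : 0 < qbar := by rw [hqbardef]; linarith
  set c := PS * PYv / (pbar * qbar) with hcdef
  have hc : 0 ≤ c := by positivity
  -- pointwise tangent bound
  have hpt : ∀ θ : (Fin M1 → W × (Fin J2 → U)) × (Fin J2 → Fin M2),
      hbMu qSY qWU M1 M2 J2 θ * (ind (((θ.1 i).1, (θ.1 i).2 j) = (w, u)) *
        (PS * PYv * (3 - hbDenE qSY qWU M1 J2 θ.1 s / pbar
          - hbDenD qSY qWU M1 M2 J2 θ i (θ.2 j) y / qbar) / (pbar * qbar)))
      ≤ hbMu qSY qWU M1 M2 J2 θ * (ind (((θ.1 i).1, (θ.1 i).2 j) = (w, u)) *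
        ((PS / hbDenE qSY qWU M1 J2 θ.1 s) *
         (PYv / hbDenD qSY qWU M1 M2 J2 θ i (θ.2 j) y))) := by
    intro θ
    by_cases hcond : ((θ.1 i).1, (θ.1 i).2 j) = (w, u)
    · have hw : (θ.1 i).1 = w := congrArg Prod.fst hcond
      have hu : (θ.1 i).2 j = u := congrArg Prod.snd hcond
      have hDE : PS ≤ hbDenE qSY qWU M1 J2 θ.1 s := by
        unfold hbDenE
        calc PS = hbPS qSY qWU s (θ.1 i).1 ((θ.1 i).2 j) := by rw [hw, hu]
          _ ≤ ∑ j' : Fin J2, hbPS qSY qWU s (θ.1 i).1 ((θ.1 i).2 j') :=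
            Finset.single_le_sum (fun j' _ => hbPS_nonneg qSY qWU s _ _) (Finset.mem_univ j)
          _ ≤ ∑ i' : Fin M1, ∑ j' : Fin J2, hbPS qSY qWU s (θ.1 i').1 ((θ.1 i').2 j') :=
            Finset.single_le_sum
              (f := fun i' => ∑ j' : Fin J2, hbPS qSY qWU s (θ.1 i').1 ((θ.1 i').2 j'))
              (fun i' _ => Finset.sum_nonneg fun j' _ => hbPS_nonneg qSY qWU s _ _)
              (Finset.mem_univ i)
      have hDD : PYv ≤ hbDenD qSY qWU M1 M2 J2 θ i (θ.2 j) y := by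
        unfold hbDenD
        calc PYv = ind (θ.2 j = θ.2 j) * hbPY qSY qWU y (θ.1 i).1 ((θ.1 i).2 j) := by
              rw [ind_true rfl, one_mul, hw, hu]
          _ ≤ ∑ j' : Fin J2, ind (θ.2 j' = θ.2 j) * hbPY qSY qWU y (θ.1 i).1 ((θ.1 i).2 j') :=
            Finset.single_le_sum
              (f := fun j' => ind (θ.2 j' = θ.2 j) * hbPY qSY qWU y (θ.1 i).1 ((θ.1 i).2 j'))
              (fun j' _ => mul_nonneg (ind_nonneg' _) (hbPY_nonneg qSY qWU y _ _))
              (Finset.mem_univ j)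
      have hDEpos : 0 < hbDenE qSY qWU M1 J2 θ.1 s := lt_of_lt_of_le hPS hDE
      have hDDpos : 0 < hbDenD qSY qWU M1 M2 J2 θ i (θ.2 j) y := lt_of_lt_of_le hPY hDD
      apply mul_le_mul_of_nonneg_left _ (hbMu_nonneg qSY qWU M1 M2 J2 θ)
      apply mul_le_mul_of_nonneg_left _ (ind_nonneg' _)
      have ht := tangent_ineq hDEpos hDDpos hpbar hqbar
      calc PS * PYv * (3 - hbDenE qSY qWU M1 J2 θ.1 s / pbar
              - hbDenD qSY qWU M1 M2 J2 θ i (θ.2 j) y / qbar) / (pbar * qbar)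
          = (PS * PYv) * ((3 - hbDenE qSY qWU M1 J2 θ.1 s / pbar
              - hbDenD qSY qWU M1 M2 J2 θ i (θ.2 j) y / qbar) / (pbar * qbar)) := by ring
        _ ≤ (PS * PYv) * (1 / (hbDenE qSY qWU M1 J2 θ.1 s *
              hbDenD qSY qWU M1 M2 J2 θ i (θ.2 j) y)) :=
            mul_le_mul_of_nonneg_left ht (by positivity)
        _ = (PS / hbDenE qSY qWU M1 J2 θ.1 s) *
              (PYv / hbDenD qSY qWU M1 M2 J2 θ i (θ.2 j) y) := by
            rw [mul_one_div, div_mul_div_comm]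
    · rw [ind_false hcond]
      simp
  -- sum of the tangent minorant
  have hsum : (∑ θ : (Fin M1 → W × (Fin J2 → U)) × (Fin J2 → Fin M2),
      hbMu qSY qWU M1 M2 J2 θ * (ind (((θ.1 i).1, (θ.1 i).2 j) = (w, u)) *
        (PS * PYv * (3 - hbDenE qSY qWU M1 J2 θ.1 s / pbar
          - hbDenD qSY qWU M1 M2 J2 θ i (θ.2 j) y / qbar) / (pbar * qbar))))
      = 3 * c * (∑ θ : (Fin M1 → W × (Fin J2 → U)) × (Fin J2 → Fin M2),
            hbMu qSY qWU M1 M2 J2 θ * ind (((θ.1 i).1, (θ.1 i).2 j) = (w, u)))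
        - ((c / pbar) * (∑ θ : (Fin M1 → W × (Fin J2 → U)) × (Fin J2 → Fin M2),
            hbMu qSY qWU M1 M2 J2 θ * (ind (((θ.1 i).1, (θ.1 i).2 j) = (w, u)) *
              hbDenE qSY qWU M1 J2 θ.1 s))
          + (c / qbar) * (∑ θ : (Fin M1 → W × (Fin J2 → U)) × (Fin J2 → Fin M2),
            hbMu qSY qWU M1 M2 J2 θ * (ind (((θ.1 i).1, (θ.1 i).2 j) = (w, u)) *
              hbDenD qSY qWU M1 M2 J2 θ i (θ.2 j) y))) := by
    rw [Finset.mul_sum, Finset.mul_sum, Finset.mul_sum, ← Finset.sum_add_distrib,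
      ← Finset.sum_sub_distrib]
    apply Finset.sum_congr rfl
    intro θ _
    rw [hcdef]
    field_simp
    ring
  have hS0 := hbTheta_mass qSY qWU M1 M2 J2 hU hM2 i j w u
  have hSE := hbTheta_E qSY qWU M1 M2 J2 hU hM2 s i j w u
  have hSD := hbTheta_D qSY qWU M1 M2 J2 hU hM2 y i j w u
  refine le_trans ?_ (Finset.sum_le_sum fun θ _ => hpt θ)
  rw [hsum, hS0, ← hmassCdef]
  have e1 : (c / pbar) * (∑ θ : (Fin M1 → W × (Fin J2 → U)) × (Fin J2 → Fin M2),
        hbMu qSY qWU M1 M2 J2 θ * (ind (((θ.1 i).1, (θ.1 i).2 j) = (w, u)) *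
          hbDenE qSY qWU M1 J2 θ.1 s))
      ≤ (c / pbar) * (massC * pbar) :=
    mul_le_mul_of_nonneg_left hSE (by positivity)
  have e2 : (c / qbar) * (∑ θ : (Fin M1 → W × (Fin J2 → U)) × (Fin J2 → Fin M2),
        hbMu qSY qWU M1 M2 J2 θ * (ind (((θ.1 i).1, (θ.1 i).2 j) = (w, u)) *
          hbDenD qSY qWU M1 M2 J2 θ i (θ.2 j) y))
      ≤ (c / qbar) * (massC * qbar) :=
    mul_le_mul_of_nonneg_left hSD (by positivity)
  have e3 : (c / pbar) * (massC * pbar) = c * massC := by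
    field_simp
  have e4 : (c / qbar) * (massC * qbar) = c * massC := by
    field_simp
  have e5 : PS * PYv * (massC / (pbar * qbar)) = c * massC := by
    rw [hcdef]
    field_simp
  linarith

end SliceLB

-- ===================== the code and step B =====================

section Code

open Finset

variable (qSY : FinPMF (S × Y)) (qWU : S → FinPMF (W × U))
variable (M1 M2 J2 : ℕ)

lemma FinPMF.sum_mapPMF_mul {α β : Type} [Fintype α] [Fintype β]
    (f : α → β) (P : FinPMF α) (F : β → ℝ) :
    (∑ b, (FinPMF.mapPMF f P).p b * F b) = ∑ a, P.p a * F (f a) := by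
  classical
  simp only [FinPMF.mapPMF_apply]
  have h1 : ∀ b : β, (∑ a, if f a = b then P.p a else 0) * F b
      = ∑ a, if f a = b then P.p a * F b else 0 := by
    intro b
    rw [Finset.sum_mul]
    apply Finset.sum_congr rfl
    intro a _
    rw [ite_mul, zero_mul]
  rw [Finset.sum_congr rfl fun b _ => h1 b, Finset.sum_comm]
  apply Finset.sum_congr rfl
  intro a _
  rw [Finset.sum_ite_eq Finset.univ (f a) (fun b => P.p a * F b)]
  simp

lemma FinPMF.sum_purePMF_mul {α : Type} [Fintype α] (a : α) (F : α → ℝ) :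
    (∑ x, (FinPMF.purePMF a).p x * F x) = F a := by
  classical
  simp only [FinPMF.purePMF_apply]
  have h1 : ∀ x : α, (if x = a then (1:ℝ) else 0) * F x = if x = a then F x else 0 := by
    intro x
    rw [ite_mul, one_mul, zero_mul]
  rw [Finset.sum_congr rfl fun x _ => h1 x, Finset.sum_ite_eq' Finset.univ a F]
  simp

/-- the encoder. -/
noncomputable def hbEnc (hM1 : 0 < M1) (hJ2 : 0 < J2)
    (θ : (Fin M1 → W × (Fin J2 → U)) × (Fin J2 → Fin M2)) (s : S) :
    FinPMF (Fin (M1 * M2)) :=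
  haveI : Nonempty (Fin M1 × Fin J2) := ⟨(⟨0, hM1⟩, ⟨0, hJ2⟩)⟩
  FinPMF.mapPMF (fun ij => finProdFinEquiv (ij.1, θ.2 ij.2))
    (FinPMF.normPMF (fun ij : Fin M1 × Fin J2 =>
      hbPS qSY qWU s (θ.1 ij.1).1 ((θ.1 ij.1).2 ij.2)))

/-- decoder 1. -/
noncomputable def hbDec1 (g1 : W → R1)
    (θ : (Fin M1 → W × (Fin J2 → U)) × (Fin J2 → Fin M2)) (m : Fin (M1 * M2)) :
    FinPMF R1 :=
  FinPMF.purePMF (g1 ((θ.1 (finProdFinEquiv.symm m).1).1))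

/-- decoder 2. -/
noncomputable def hbDec2 (g2 : W → U → Y → R2) (hJ2 : 0 < J2)
    (θ : (Fin M1 → W × (Fin J2 → U)) × (Fin J2 → Fin M2)) (m : Fin (M1 * M2)) (y : Y) :
    FinPMF R2 :=
  haveI : Nonempty (Fin J2) := ⟨⟨0, hJ2⟩⟩
  FinPMF.mapPMF (fun j => g2 ((θ.1 (finProdFinEquiv.symm m).1).1)
      ((θ.1 (finProdFinEquiv.symm m).1).2 j) y)
    (FinPMF.normPMF (fun j : Fin J2 =>
      ind (θ.2 j = (finProdFinEquiv.symm m).2) *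
        hbPY qSY qWU y (θ.1 (finProdFinEquiv.symm m).1).1
          ((θ.1 (finProdFinEquiv.symm m).1).2 j)))

set_option maxHeartbeats 2000000 in
/-- Step B: the performance of the code is bounded below by the likelihood-ratio sum. -/
lemma hbStepB (d1 : S → R1 → ℝ) (d2 : S → R2 → ℝ) (D1 D2 : ℝ)
    (g1 : W → R1) (g2 : W → U → Y → R2) (hM1 : 0 < M1) (hJ2 : 0 < J2)
    (θ : (Fin M1 → W × (Fin J2 → U)) × (Fin J2 → Fin M2)) :
    (∑ s : S, ∑ y : Y, qSY.p (s, y) * ∑ i : Fin M1, ∑ j : Fin J2,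
      (hbPS qSY qWU s (θ.1 i).1 ((θ.1 i).2 j) / hbDenE qSY qWU M1 J2 θ.1 s) *
        ((hbPY qSY qWU y (θ.1 i).1 ((θ.1 i).2 j) / hbDenD qSY qWU M1 M2 J2 θ i (θ.2 j) y) *
          ind (d1 s (g1 ((θ.1 i).1)) ≤ D1 ∧ d2 s (g2 ((θ.1 i).1) ((θ.1 i).2 j) y) ≤ D2)))
    ≤ pNoExcessHB (M1 * M2) qSY d1 d2 D1 D2
        (hbEnc qSY qWU M1 M2 J2 hM1 hJ2 θ) (hbDec1 M1 M2 J2 g1 θ)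
        (hbDec2 qSY qWU M1 M2 J2 g2 hJ2 θ) := by
  haveI hne1 : Nonempty (Fin M1 × Fin J2) := ⟨(⟨0, hM1⟩, ⟨0, hJ2⟩)⟩
  haveI hne2 : Nonempty (Fin J2) := ⟨⟨0, hJ2⟩⟩
  unfold pNoExcessHB
  apply Finset.sum_le_sum
  intro s _
  apply Finset.sum_le_sum
  intro y _
  -- factor out q(s,y)
  have hq : (∑ m : Fin (M1 * M2), ∑ r1 : R1, ∑ r2 : R2,
      qSY.p (s, y) * (hbEnc qSY qWU M1 M2 J2 hM1 hJ2 θ s).p m *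
        (hbDec1 M1 M2 J2 g1 θ m).p r1 * (hbDec2 qSY qWU M1 M2 J2 g2 hJ2 θ m y).p r2 *
        ind (d1 s r1 ≤ D1 ∧ d2 s r2 ≤ D2))
      = qSY.p (s, y) * ∑ m : Fin (M1 * M2), (hbEnc qSY qWU M1 M2 J2 hM1 hJ2 θ s).p m *
          (∑ r1 : R1, (hbDec1 M1 M2 J2 g1 θ m).p r1 *
            (∑ r2 : R2, (hbDec2 qSY qWU M1 M2 J2 g2 hJ2 θ m y).p r2 *
              ind (d1 s r1 ≤ D1 ∧ d2 s r2 ≤ D2))) := by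
    rw [Finset.mul_sum]
    apply Finset.sum_congr rfl
    intro m _
    rw [Finset.mul_sum, Finset.mul_sum]
    apply Finset.sum_congr rfl
    intro r1 _
    rw [Finset.mul_sum, Finset.mul_sum, Finset.mul_sum]
    apply Finset.sum_congr rfl
    intro r2 _
    ring
  rw [hq]
  apply mul_le_mul_of_nonneg_left _ (qSY.nonneg (s, y))
  -- collapse r1 and r2
  have hcol : ∀ m : Fin (M1 * M2),
      (∑ r1 : R1, (hbDec1 M1 M2 J2 g1 θ m).p r1 *
        (∑ r2 : R2, (hbDec2 qSY qWU M1 M2 J2 g2 hJ2 θ m y).p r2 *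
          ind (d1 s r1 ≤ D1 ∧ d2 s r2 ≤ D2)))
      = ∑ j' : Fin J2,
          (FinPMF.normPMF (fun j : Fin J2 =>
            ind (θ.2 j = (finProdFinEquiv.symm m).2) *
              hbPY qSY qWU y (θ.1 (finProdFinEquiv.symm m).1).1
                ((θ.1 (finProdFinEquiv.symm m).1).2 j))).p j' *
          ind (d1 s (g1 ((θ.1 (finProdFinEquiv.symm m).1).1)) ≤ D1 ∧
            d2 s (g2 ((θ.1 (finProdFinEquiv.symm m).1).1)
              ((θ.1 (finProdFinEquiv.symm m).1).2 j') y) ≤ D2) := by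
    intro m
    unfold hbDec1 hbDec2
    rw [FinPMF.sum_purePMF_mul (g1 ((θ.1 (finProdFinEquiv.symm m).1).1))
      (fun r1 => ∑ r2 : R2, (FinPMF.mapPMF _ _).p r2 * ind (d1 s r1 ≤ D1 ∧ d2 s r2 ≤ D2))]
    rw [FinPMF.sum_mapPMF_mul]
  have hR : (∑ m : Fin (M1 * M2), (hbEnc qSY qWU M1 M2 J2 hM1 hJ2 θ s).p m *
      (∑ r1 : R1, (hbDec1 M1 M2 J2 g1 θ m).p r1 *
        (∑ r2 : R2, (hbDec2 qSY qWU M1 M2 J2 g2 hJ2 θ m y).p r2 *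
          ind (d1 s r1 ≤ D1 ∧ d2 s r2 ≤ D2))))
      = ∑ i : Fin M1, ∑ j : Fin J2,
          (FinPMF.normPMF (fun ij : Fin M1 × Fin J2 =>
            hbPS qSY qWU s (θ.1 ij.1).1 ((θ.1 ij.1).2 ij.2))).p (i, j) *
          (∑ j' : Fin J2,
            (FinPMF.normPMF (fun t : Fin J2 =>
              ind (θ.2 t = (finProdFinEquiv.symm (finProdFinEquiv (i, θ.2 j))).2) *
                hbPY qSY qWU y (θ.1 (finProdFinEquiv.symm (finProdFinEquiv (i, θ.2 j))).1).1
                  ((θ.1 (finProdFinEquiv.symm (finProdFinEquiv (i, θ.2 j))).1).2 t))).p j' *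
            ind (d1 s (g1 ((θ.1 (finProdFinEquiv.symm (finProdFinEquiv (i, θ.2 j))).1).1)) ≤ D1 ∧
              d2 s (g2 ((θ.1 (finProdFinEquiv.symm (finProdFinEquiv (i, θ.2 j))).1).1)
                ((θ.1 (finProdFinEquiv.symm (finProdFinEquiv (i, θ.2 j))).1).2 j') y) ≤ D2)) := by
    calc (∑ m : Fin (M1 * M2), (hbEnc qSY qWU M1 M2 J2 hM1 hJ2 θ s).p m *
        (∑ r1 : R1, (hbDec1 M1 M2 J2 g1 θ m).p r1 *
          (∑ r2 : R2, (hbDec2 qSY qWU M1 M2 J2 g2 hJ2 θ m y).p r2 *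
            ind (d1 s r1 ≤ D1 ∧ d2 s r2 ≤ D2))))
        = ∑ m : Fin (M1 * M2), (hbEnc qSY qWU M1 M2 J2 hM1 hJ2 θ s).p m *
            (∑ j' : Fin J2,
              (FinPMF.normPMF (fun t : Fin J2 =>
                ind (θ.2 t = (finProdFinEquiv.symm m).2) *
                  hbPY qSY qWU y (θ.1 (finProdFinEquiv.symm m).1).1
                    ((θ.1 (finProdFinEquiv.symm m).1).2 t))).p j' *
              ind (d1 s (g1 ((θ.1 (finProdFinEquiv.symm m).1).1)) ≤ D1 ∧
                d2 s (g2 ((θ.1 (finProdFinEquiv.symm m).1).1)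
                  ((θ.1 (finProdFinEquiv.symm m).1).2 j') y) ≤ D2)) :=
          Finset.sum_congr rfl fun m _ => by rw [hcol m]
      _ = ∑ ij : Fin M1 × Fin J2,
            (FinPMF.normPMF (fun ij : Fin M1 × Fin J2 =>
              hbPS qSY qWU s (θ.1 ij.1).1 ((θ.1 ij.1).2 ij.2))).p ij *
            (∑ j' : Fin J2,
              (FinPMF.normPMF (fun t : Fin J2 =>
                ind (θ.2 t = (finProdFinEquiv.symm (finProdFinEquiv (ij.1, θ.2 ij.2))).2) *
                  hbPY qSY qWU y (θ.1 (finProdFinEquiv.symm (finProdFinEquiv (ij.1, θ.2 ij.2))).1).1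
                    ((θ.1 (finProdFinEquiv.symm (finProdFinEquiv (ij.1, θ.2 ij.2))).1).2 t))).p j' *
              ind (d1 s (g1 ((θ.1 (finProdFinEquiv.symm (finProdFinEquiv (ij.1, θ.2 ij.2))).1).1)) ≤ D1 ∧
                d2 s (g2 ((θ.1 (finProdFinEquiv.symm (finProdFinEquiv (ij.1, θ.2 ij.2))).1).1)
                  ((θ.1 (finProdFinEquiv.symm (finProdFinEquiv (ij.1, θ.2 ij.2))).1).2 j') y) ≤ D2)) := by
          unfold hbEnc
          exact FinPMF.sum_mapPMF_mul _ _ _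
      _ = _ := Fintype.sum_prod_type _
  rw [hR]
  -- now compare termwise over (i, j)
  apply Finset.sum_le_sum
  intro i _
  apply Finset.sum_le_sum
  intro j _
  rw [Equiv.symm_apply_apply]
  -- the chosen j term of the inner sum
  set k := θ.2 j with hk
  set decN := FinPMF.normPMF (fun j' : Fin J2 =>
    ind (θ.2 j' = k) * hbPY qSY qWU y (θ.1 i).1 ((θ.1 i).2 j')) with hdecN
  set encN := FinPMF.normPMF (fun ij : Fin M1 × Fin J2 =>
    hbPS qSY qWU s (θ.1 ij.1).1 ((θ.1 ij.1).2 ij.2)) with hencN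
  have hIndnn : ∀ j' : Fin J2, (0:ℝ) ≤ ind (d1 s (g1 ((θ.1 i).1)) ≤ D1 ∧
      d2 s (g2 ((θ.1 i).1) ((θ.1 i).2 j') y) ≤ D2) := fun j' => ind_nonneg' _
  have henc_ge : hbPS qSY qWU s (θ.1 i).1 ((θ.1 i).2 j) / hbDenE qSY qWU M1 J2 θ.1 s
      ≤ encN.p (i, j) := by
    have h := FinPMF.normPMF_ge (fun ij : Fin M1 × Fin J2 =>
        hbPS qSY qWU s (θ.1 ij.1).1 ((θ.1 ij.1).2 ij.2))
      (fun ij => hbPS_nonneg qSY qWU s _ _) (i, j)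
    have htot : (∑ ij : Fin M1 × Fin J2, hbPS qSY qWU s (θ.1 ij.1).1 ((θ.1 ij.1).2 ij.2))
        = hbDenE qSY qWU M1 J2 θ.1 s := by
      unfold hbDenE
      rw [Fintype.sum_prod_type]
    rw [htot] at h
    exact h
  have hdec_ge : hbPY qSY qWU y (θ.1 i).1 ((θ.1 i).2 j) / hbDenD qSY qWU M1 M2 J2 θ i k y
      ≤ decN.p j := by
    have h := FinPMF.normPMF_ge (fun j' : Fin J2 =>
        ind (θ.2 j' = k) * hbPY qSY qWU y (θ.1 i).1 ((θ.1 i).2 j'))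
      (fun j' => mul_nonneg (ind_nonneg' _) (hbPY_nonneg qSY qWU y _ _)) j
    have hj : ind (θ.2 j = k) * hbPY qSY qWU y (θ.1 i).1 ((θ.1 i).2 j)
        = hbPY qSY qWU y (θ.1 i).1 ((θ.1 i).2 j) := by
      rw [ind_true hk.symm, one_mul]
    have htot : (∑ j' : Fin J2, ind (θ.2 j' = k) * hbPY qSY qWU y (θ.1 i).1 ((θ.1 i).2 j'))
        = hbDenD qSY qWU M1 M2 J2 θ i k y := by
      unfold hbDenD
      rfl
    rw [hj, htot] at h
    exact h
  calc (hbPS qSY qWU s (θ.1 i).1 ((θ.1 i).2 j) / hbDenE qSY qWU M1 J2 θ.1 s) *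
        ((hbPY qSY qWU y (θ.1 i).1 ((θ.1 i).2 j) / hbDenD qSY qWU M1 M2 J2 θ i (θ.2 j) y) *
          ind (d1 s (g1 ((θ.1 i).1)) ≤ D1 ∧ d2 s (g2 ((θ.1 i).1) ((θ.1 i).2 j) y) ≤ D2))
      ≤ encN.p (i, j) * (decN.p j *
          ind (d1 s (g1 ((θ.1 i).1)) ≤ D1 ∧ d2 s (g2 ((θ.1 i).1) ((θ.1 i).2 j) y) ≤ D2)) := by
        apply mul_le_mul
        · exact henc_ge
        · exact mul_le_mul_of_nonneg_right hdec_ge (hIndnn j)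
        · apply mul_nonneg _ (hIndnn j)
          apply div_nonneg (hbPY_nonneg qSY qWU y _ _)
          exact hbDenD_nonneg qSY qWU M1 M2 J2 θ i (θ.2 j) y
        · exact encN.nonneg (i, j)
    _ ≤ encN.p (i, j) * (∑ j' : Fin J2, decN.p j' *
          ind (d1 s (g1 ((θ.1 i).1)) ≤ D1 ∧ d2 s (g2 ((θ.1 i).1) ((θ.1 i).2 j') y) ≤ D2)) := by
        apply mul_le_mul_of_nonneg_left _ (encN.nonneg (i, j))
        exact Finset.single_le_sum
          (f := fun j' => decN.p j' * ind (d1 s (g1 ((θ.1 i).1)) ≤ D1 ∧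
            d2 s (g2 ((θ.1 i).1) ((θ.1 i).2 j') y) ≤ D2))
          (fun j' _ => mul_nonneg (decN.nonneg j') (hIndnn j')) (Finset.mem_univ j)

end Code

-- ===================== final algebra =====================

section Final

open Finset

variable (qSY : FinPMF (S × Y)) (qWU : S → FinPMF (W × U))
variable (M1 M2 J2 : ℕ)

set_option maxHeartbeats 1000000 in
lemma hbFinal (hM1 : 0 < M1) (hM2 : 0 < M2) (hJ2 : 0 < J2)
    (d1 : S → R1 → ℝ) (d2 : S → R2 → ℝ) (D1 D2 : ℝ)
    (g1 : W → R1) (g2 : W → U → Y → R2) (s : S) (y : Y) (w : W) (u : U) :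
    qHB qSY qWU s y w u *
      ind (d1 s (g1 w) ≤ D1 ∧ d2 s (g2 w u y) ≤ D2) *
      ((1 + (M1 : ℝ)⁻¹ * (2 : ℝ) ^ (iSW qSY qWU s w)
          + ((M1 : ℝ) * (J2 : ℝ))⁻¹ * (2 : ℝ) ^ (iSWU qSY qWU s w u)) *
       (1 + (J2 : ℝ) * (M2 : ℝ)⁻¹ * (2 : ℝ) ^ (-(iYUcW qSY qWU y u w))))⁻¹
    ≤ qSY.p (s, y) * ((M1:ℝ) * ((J2:ℝ) *
        (ind (d1 s (g1 w) ≤ D1 ∧ d2 s (g2 w u y) ≤ D2) *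
          (hbPS qSY qWU s w u * hbPY qSY qWU y w u *
            ((mW qSY qWU w * hbPUW qSY qWU w u) /
              ((hbPS qSY qWU s w u + (J2:ℝ) * (mSW qSY qWU s w / mW qSY qWU w)
                  + (M1:ℝ) * ((J2:ℝ) * mS qSY s)) *
               (hbPY qSY qWU y w u + (J2:ℝ) * ((M2:ℝ)⁻¹ *
                  (mYW qSY qWU y w / mW qSY qWU w))))))))) := by
  have hA : (0:ℝ) < 1 + (M1 : ℝ)⁻¹ * (2 : ℝ) ^ (iSW qSY qWU s w)
      + ((M1 : ℝ) * (J2 : ℝ))⁻¹ * (2 : ℝ) ^ (iSWU qSY qWU s w u) := by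
    have h1 : (0:ℝ) < (2 : ℝ) ^ (iSW qSY qWU s w) := Real.rpow_pos_of_pos two_pos _
    have h2 : (0:ℝ) < (2 : ℝ) ^ (iSWU qSY qWU s w u) := Real.rpow_pos_of_pos two_pos _
    positivity
  have hB : (0:ℝ) < 1 + (J2 : ℝ) * (M2 : ℝ)⁻¹ * (2 : ℝ) ^ (-(iYUcW qSY qWU y u w)) := by
    have h1 : (0:ℝ) < (2 : ℝ) ^ (-(iYUcW qSY qWU y u w)) := Real.rpow_pos_of_pos two_pos _
    positivity
  by_cases hq : 0 < qHB qSY qWU s y w u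
  swap
  · have h0 : qHB qSY qWU s y w u = 0 :=
      le_antisymm (not_lt.mp hq) (qHB_nonneg qSY qWU s y w u)
    rw [h0, zero_mul, zero_mul]
    apply mul_nonneg (qSY.nonneg _)
    apply mul_nonneg (by positivity)
    apply mul_nonneg (by positivity)
    apply mul_nonneg (ind_nonneg' _)
    apply mul_nonneg
    · exact mul_nonneg (hbPS_nonneg qSY qWU s w u) (hbPY_nonneg qSY qWU y w u)
    · apply div_nonneg
      · exact mul_nonneg (mW_nonneg qSY qWU w) (hbPUW_nonneg qSY qWU w u)
      · apply mul_nonneg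
        · have := hbPS_nonneg qSY qWU s w u
          have := mS_nonneg qSY s
          have h2 : (0:ℝ) ≤ mSW qSY qWU s w / mW qSY qWU w :=
            div_nonneg (mSW_nonneg qSY qWU s w) (mW_nonneg qSY qWU w)
          positivity
        · have := hbPY_nonneg qSY qWU y w u
          have h2 : (0:ℝ) ≤ mYW qSY qWU y w / mW qSY qWU w :=
            div_nonneg (mYW_nonneg qSY qWU y w) (mW_nonneg qSY qWU w)
          positivity
  -- the positive case
  have hqsy : 0 < qSY.p (s, y) := by
    rcases mul_pos_iff.mp hq with ⟨h1, _⟩ | ⟨h1, _⟩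
    · exact h1
    · exact absurd (qSY.nonneg (s, y)) (not_le.mpr h1)
  have hX : 0 < (qWU s).p (w, u) := by
    rcases mul_pos_iff.mp hq with ⟨_, h2⟩ | ⟨h1, _⟩
    · exact h2
    · exact absurd (qSY.nonneg (s, y)) (not_le.mpr h1)
  have hmS : 0 < mS qSY s := lt_of_lt_of_le hqsy (qSY_le_mS qSY s y)
  have hmSWU : 0 < mSWU qSY qWU s w u := mul_pos hmS hX
  have hmWU : 0 < mWU qSY qWU w u := lt_of_lt_of_le hmSWU (mSWU_le_mWU qSY qWU s w u)
  have hmSW : 0 < mSW qSY qWU s w := by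
    apply lt_of_lt_of_le hmSWU
    rw [← sum_u_mSWU qSY qWU s w]
    exact Finset.single_le_sum (fun u' _ => mSWU_nonneg qSY qWU s w u') (Finset.mem_univ u)
  have hmW : 0 < mW qSY qWU w := lt_of_lt_of_le hmSW (mSW_le_mW qSY qWU s w)
  have hmYUW : 0 < mYUW qSY qWU y u w := by
    apply lt_of_lt_of_le hq
    unfold mYUW
    exact Finset.single_le_sum (fun s' _ => qHB_nonneg qSY qWU s' y w u) (Finset.mem_univ s)
  have hmYW : 0 < mYW qSY qWU y w := by
    apply lt_of_lt_of_le hmYUW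
    rw [← sum_u_mYUW qSY qWU y w]
    exact Finset.single_le_sum (fun u' _ => mYUW_nonneg qSY qWU y u' w) (Finset.mem_univ u)
  -- rewrite the information densities
  have h2SW : (2 : ℝ) ^ (iSW qSY qWU s w) = mSW qSY qWU s w / (mS qSY s * mW qSY qWU w) := by
    unfold iSW
    exact Real.rpow_logb two_pos (by norm_num) (div_pos hmSW (mul_pos hmS hmW))
  have h2SWU : (2 : ℝ) ^ (iSWU qSY qWU s w u)
      = mSWU qSY qWU s w u / (mS qSY s * mWU qSY qWU w u) := by
    unfold iSWU
    exact Real.rpow_logb two_pos (by norm_num) (div_pos hmSWU (mul_pos hmS hmWU))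
  have h2Y : (2 : ℝ) ^ (-(iYUcW qSY qWU y u w))
      = mYW qSY qWU y w * mWU qSY qWU w u / (mYUW qSY qWU y u w * mW qSY qWU w) := by
    rw [Real.rpow_neg (le_of_lt two_pos)]
    unfold iYUcW
    rw [Real.rpow_logb two_pos (by norm_num)
      (div_pos (mul_pos hmYUW hmW) (mul_pos hmYW hmWU))]
    rw [inv_div]
  have hmassC : mW qSY qWU w * hbPUW qSY qWU w u = mWU qSY qWU w u := by
    unfold hbPUW
    rw [if_pos hmW]
    field_simp
  have hPSv : hbPS qSY qWU s w u = mSWU qSY qWU s w u / mWU qSY qWU w u := rfl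
  have hPYv : hbPY qSY qWU y w u = mYUW qSY qWU y u w / mWU qSY qWU w u := rfl
  have hqhb : qHB qSY qWU s y w u = qSY.p (s, y) * (qWU s).p (w, u) := rfl
  have hmswu : mSWU qSY qWU s w u = mS qSY s * (qWU s).p (w, u) := rfl
  -- claim 1 : pbar = M1 * J2 * mS * A
  have hclaim1 : hbPS qSY qWU s w u + (J2:ℝ) * (mSW qSY qWU s w / mW qSY qWU w)
      + (M1:ℝ) * ((J2:ℝ) * mS qSY s)
      = (M1:ℝ) * (J2:ℝ) * mS qSY s *
        (1 + (M1 : ℝ)⁻¹ * (2 : ℝ) ^ (iSW qSY qWU s w)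
          + ((M1 : ℝ) * (J2 : ℝ))⁻¹ * (2 : ℝ) ^ (iSWU qSY qWU s w u)) := by
    rw [h2SW, h2SWU, hPSv]
    have hM1' : (M1:ℝ) ≠ 0 := by positivity
    have hJ2' : (J2:ℝ) ≠ 0 := by positivity
    field_simp
    ring
  -- claim 2 : qbar = PY * B
  have hclaim2 : hbPY qSY qWU y w u + (J2:ℝ) * ((M2:ℝ)⁻¹ * (mYW qSY qWU y w / mW qSY qWU w))
      = hbPY qSY qWU y w u *
        (1 + (J2 : ℝ) * (M2 : ℝ)⁻¹ * (2 : ℝ) ^ (-(iYUcW qSY qWU y u w))) := by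
    rw [h2Y, hPYv]
    have hM2' : (M2:ℝ) ≠ 0 := by positivity
    field_simp
  rw [hclaim1, hclaim2]
  apply le_of_eq
  rw [hqhb, hPSv, hPYv, hmassC, hmswu]
  have hM1' : (M1:ℝ) ≠ 0 := by positivity
  have hJ2' : (J2:ℝ) ≠ 0 := by positivity
  have hA' : (1 + (M1 : ℝ)⁻¹ * (2 : ℝ) ^ (iSW qSY qWU s w)
      + ((M1 : ℝ) * (J2 : ℝ))⁻¹ * (2 : ℝ) ^ (iSWU qSY qWU s w u)) ≠ 0 := ne_of_gt hA
  have hB' : (1 + (J2 : ℝ) * (M2 : ℝ)⁻¹ * (2 : ℝ) ^ (-(iYUcW qSY qWU y u w))) ≠ 0 := ne_of_gt hB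
  have hPY' : mYUW qSY qWU y u w / mWU qSY qWU w u ≠ 0 := by positivity
  field_simp

end Final

-- ===================== per-(s,y) assembly =====================

section Assembly

open Finset

variable (qSY : FinPMF (S × Y)) (qWU : S → FinPMF (W × U))
variable (M1 M2 J2 : ℕ)

set_option maxHeartbeats 2000000 in
lemma hbPerSY (hU : Nonempty U) (hM1 : 0 < M1) (hM2 : 0 < M2) (hJ2 : 0 < J2)
    (d1 : S → R1 → ℝ) (d2 : S → R2 → ℝ) (D1 D2 : ℝ)
    (g1 : W → R1) (g2 : W → U → Y → R2) (s : S) (y : Y) :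
    (∑ w : W, ∑ u : U,
      qHB qSY qWU s y w u *
        ind (d1 s (g1 w) ≤ D1 ∧ d2 s (g2 w u y) ≤ D2) *
        ((1 + (M1 : ℝ)⁻¹ * (2 : ℝ) ^ (iSW qSY qWU s w)
            + ((M1 : ℝ) * (J2 : ℝ))⁻¹ * (2 : ℝ) ^ (iSWU qSY qWU s w u)) *
         (1 + (J2 : ℝ) * (M2 : ℝ)⁻¹ * (2 : ℝ) ^ (-(iYUcW qSY qWU y u w))))⁻¹)
    ≤ qSY.p (s, y) * ∑ i : Fin M1, ∑ j : Fin J2,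
        ∑ θ : (Fin M1 → W × (Fin J2 → U)) × (Fin J2 → Fin M2),
          hbMu qSY qWU M1 M2 J2 θ *
            ((hbPS qSY qWU s (θ.1 i).1 ((θ.1 i).2 j) / hbDenE qSY qWU M1 J2 θ.1 s) *
              ((hbPY qSY qWU y (θ.1 i).1 ((θ.1 i).2 j) /
                  hbDenD qSY qWU M1 M2 J2 θ i (θ.2 j) y) *
                ind (d1 s (g1 ((θ.1 i).1)) ≤ D1 ∧
                  d2 s (g2 ((θ.1 i).1) ((θ.1 i).2 j) y) ≤ D2))) := by
  have hIJ : ∀ (i : Fin M1) (j : Fin J2),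
      (∑ w : W, ∑ u : U,
        ind (d1 s (g1 w) ≤ D1 ∧ d2 s (g2 w u y) ≤ D2) *
          (hbPS qSY qWU s w u * hbPY qSY qWU y w u *
            ((mW qSY qWU w * hbPUW qSY qWU w u) /
              ((hbPS qSY qWU s w u + (J2:ℝ) * (mSW qSY qWU s w / mW qSY qWU w)
                  + (M1:ℝ) * ((J2:ℝ) * mS qSY s)) *
               (hbPY qSY qWU y w u + (J2:ℝ) * ((M2:ℝ)⁻¹ *
                  (mYW qSY qWU y w / mW qSY qWU w)))))))
      ≤ ∑ θ : (Fin M1 → W × (Fin J2 → U)) × (Fin J2 → Fin M2),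
          hbMu qSY qWU M1 M2 J2 θ *
            ((hbPS qSY qWU s (θ.1 i).1 ((θ.1 i).2 j) / hbDenE qSY qWU M1 J2 θ.1 s) *
              ((hbPY qSY qWU y (θ.1 i).1 ((θ.1 i).2 j) /
                  hbDenD qSY qWU M1 M2 J2 θ i (θ.2 j) y) *
                ind (d1 s (g1 ((θ.1 i).1)) ≤ D1 ∧
                  d2 s (g2 ((θ.1 i).1) ((θ.1 i).2 j) y) ≤ D2))) := by
    intro i j
    -- partition the θ-sum according to the codeword in slot (i,j)
    have hTeq : ∀ θ : (Fin M1 → W × (Fin J2 → U)) × (Fin J2 → Fin M2),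
        (hbPS qSY qWU s (θ.1 i).1 ((θ.1 i).2 j) / hbDenE qSY qWU M1 J2 θ.1 s) *
          ((hbPY qSY qWU y (θ.1 i).1 ((θ.1 i).2 j) /
              hbDenD qSY qWU M1 M2 J2 θ i (θ.2 j) y) *
            ind (d1 s (g1 ((θ.1 i).1)) ≤ D1 ∧
              d2 s (g2 ((θ.1 i).1) ((θ.1 i).2 j) y) ≤ D2))
        = ∑ w : W, ∑ u : U, ind (((θ.1 i).1, (θ.1 i).2 j) = (w, u)) *
            ((hbPS qSY qWU s w u / hbDenE qSY qWU M1 J2 θ.1 s) *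
              ((hbPY qSY qWU y w u / hbDenD qSY qWU M1 M2 J2 θ i (θ.2 j) y) *
                ind (d1 s (g1 w) ≤ D1 ∧ d2 s (g2 w u y) ≤ D2))) := by
      intro θ
      have h0 := sum_ind_eq ((θ.1 i).1, (θ.1 i).2 j)
        (fun x : W × U => (hbPS qSY qWU s x.1 x.2 / hbDenE qSY qWU M1 J2 θ.1 s) *
          ((hbPY qSY qWU y x.1 x.2 / hbDenD qSY qWU M1 M2 J2 θ i (θ.2 j) y) *
            ind (d1 s (g1 x.1) ≤ D1 ∧ d2 s (g2 x.1 x.2 y) ≤ D2)))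
      rw [Fintype.sum_prod_type] at h0
      exact h0.symm
    have hpart : (∑ θ : (Fin M1 → W × (Fin J2 → U)) × (Fin J2 → Fin M2),
        hbMu qSY qWU M1 M2 J2 θ *
          ((hbPS qSY qWU s (θ.1 i).1 ((θ.1 i).2 j) / hbDenE qSY qWU M1 J2 θ.1 s) *
            ((hbPY qSY qWU y (θ.1 i).1 ((θ.1 i).2 j) /
                hbDenD qSY qWU M1 M2 J2 θ i (θ.2 j) y) *
              ind (d1 s (g1 ((θ.1 i).1)) ≤ D1 ∧
                d2 s (g2 ((θ.1 i).1) ((θ.1 i).2 j) y) ≤ D2))))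
        = ∑ w : W, ∑ u : U, ∑ θ : (Fin M1 → W × (Fin J2 → U)) × (Fin J2 → Fin M2),
            hbMu qSY qWU M1 M2 J2 θ * (ind (((θ.1 i).1, (θ.1 i).2 j) = (w, u)) *
              ((hbPS qSY qWU s w u / hbDenE qSY qWU M1 J2 θ.1 s) *
                ((hbPY qSY qWU y w u / hbDenD qSY qWU M1 M2 J2 θ i (θ.2 j) y) *
                  ind (d1 s (g1 w) ≤ D1 ∧ d2 s (g2 w u y) ≤ D2)))) := by
      calc _ = ∑ θ : (Fin M1 → W × (Fin J2 → U)) × (Fin J2 → Fin M2), ∑ w : W, ∑ u : U,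
            hbMu qSY qWU M1 M2 J2 θ * (ind (((θ.1 i).1, (θ.1 i).2 j) = (w, u)) *
              ((hbPS qSY qWU s w u / hbDenE qSY qWU M1 J2 θ.1 s) *
                ((hbPY qSY qWU y w u / hbDenD qSY qWU M1 M2 J2 θ i (θ.2 j) y) *
                  ind (d1 s (g1 w) ≤ D1 ∧ d2 s (g2 w u y) ≤ D2)))) := by
            apply Finset.sum_congr rfl
            intro θ _
            rw [hTeq θ, Finset.mul_sum]
            exact Finset.sum_congr rfl fun w _ => by rw [Finset.mul_sum]
        _ = _ := by
            rw [Finset.sum_comm]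
            apply Finset.sum_congr rfl
            intro w _
            rw [Finset.sum_comm]
    rw [hpart]
    apply Finset.sum_le_sum
    intro w _
    apply Finset.sum_le_sum
    intro u _
    have hre : ∀ θ : (Fin M1 → W × (Fin J2 → U)) × (Fin J2 → Fin M2),
        hbMu qSY qWU M1 M2 J2 θ * (ind (((θ.1 i).1, (θ.1 i).2 j) = (w, u)) *
          ((hbPS qSY qWU s w u / hbDenE qSY qWU M1 J2 θ.1 s) *
            ((hbPY qSY qWU y w u / hbDenD qSY qWU M1 M2 J2 θ i (θ.2 j) y) *
              ind (d1 s (g1 w) ≤ D1 ∧ d2 s (g2 w u y) ≤ D2))))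
        = ind (d1 s (g1 w) ≤ D1 ∧ d2 s (g2 w u y) ≤ D2) *
            (hbMu qSY qWU M1 M2 J2 θ * (ind (((θ.1 i).1, (θ.1 i).2 j) = (w, u)) *
              ((hbPS qSY qWU s w u / hbDenE qSY qWU M1 J2 θ.1 s) *
                (hbPY qSY qWU y w u / hbDenD qSY qWU M1 M2 J2 θ i (θ.2 j) y)))) := by
      intro θ
      ring
    rw [Finset.sum_congr rfl fun θ _ => hre θ, ← Finset.mul_sum]
    exact mul_le_mul_of_nonneg_left
      (hbSliceCore qSY qWU M1 M2 J2 hU hM2 s y i j w u) (ind_nonneg' _)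
  -- combine over (i,j) and apply the final algebra bound
  calc (∑ w : W, ∑ u : U,
      qHB qSY qWU s y w u *
        ind (d1 s (g1 w) ≤ D1 ∧ d2 s (g2 w u y) ≤ D2) *
        ((1 + (M1 : ℝ)⁻¹ * (2 : ℝ) ^ (iSW qSY qWU s w)
            + ((M1 : ℝ) * (J2 : ℝ))⁻¹ * (2 : ℝ) ^ (iSWU qSY qWU s w u)) *
         (1 + (J2 : ℝ) * (M2 : ℝ)⁻¹ * (2 : ℝ) ^ (-(iYUcW qSY qWU y u w))))⁻¹)
      ≤ ∑ w : W, ∑ u : U, qSY.p (s, y) * ((M1:ℝ) * ((J2:ℝ) *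
          (ind (d1 s (g1 w) ≤ D1 ∧ d2 s (g2 w u y) ≤ D2) *
            (hbPS qSY qWU s w u * hbPY qSY qWU y w u *
              ((mW qSY qWU w * hbPUW qSY qWU w u) /
                ((hbPS qSY qWU s w u + (J2:ℝ) * (mSW qSY qWU s w / mW qSY qWU w)
                    + (M1:ℝ) * ((J2:ℝ) * mS qSY s)) *
                 (hbPY qSY qWU y w u + (J2:ℝ) * ((M2:ℝ)⁻¹ *
                    (mYW qSY qWU y w / mW qSY qWU w))))))))) := by
        apply Finset.sum_le_sum
        intro w _
        apply Finset.sum_le_sum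
        intro u _
        exact hbFinal qSY qWU M1 M2 J2 hM1 hM2 hJ2 d1 d2 D1 D2 g1 g2 s y w u
    _ = qSY.p (s, y) * ((M1:ℝ) * ((J2:ℝ) * (∑ w : W, ∑ u : U,
          ind (d1 s (g1 w) ≤ D1 ∧ d2 s (g2 w u y) ≤ D2) *
            (hbPS qSY qWU s w u * hbPY qSY qWU y w u *
              ((mW qSY qWU w * hbPUW qSY qWU w u) /
                ((hbPS qSY qWU s w u + (J2:ℝ) * (mSW qSY qWU s w / mW qSY qWU w)
                    + (M1:ℝ) * ((J2:ℝ) * mS qSY s)) *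
                 (hbPY qSY qWU y w u + (J2:ℝ) * ((M2:ℝ)⁻¹ *
                    (mYW qSY qWU y w / mW qSY qWU w)))))))))  := by
        simp only [Finset.mul_sum]
    _ ≤ qSY.p (s, y) * ∑ i : Fin M1, ∑ j : Fin J2,
        ∑ θ : (Fin M1 → W × (Fin J2 → U)) × (Fin J2 → Fin M2),
          hbMu qSY qWU M1 M2 J2 θ *
            ((hbPS qSY qWU s (θ.1 i).1 ((θ.1 i).2 j) / hbDenE qSY qWU M1 J2 θ.1 s) *
              ((hbPY qSY qWU y (θ.1 i).1 ((θ.1 i).2 j) /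
                  hbDenD qSY qWU M1 M2 J2 θ i (θ.2 j) y) *
                ind (d1 s (g1 ((θ.1 i).1)) ≤ D1 ∧
                  d2 s (g2 ((θ.1 i).1) ((θ.1 i).2 j) y) ≤ D2))) := by
        apply mul_le_mul_of_nonneg_left _ (qSY.nonneg (s, y))
        have h2 : (∑ _i : Fin M1, ∑ _j : Fin J2, (∑ w : W, ∑ u : U,
            ind (d1 s (g1 w) ≤ D1 ∧ d2 s (g2 w u y) ≤ D2) *
              (hbPS qSY qWU s w u * hbPY qSY qWU y w u *
                ((mW qSY qWU w * hbPUW qSY qWU w u) /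
                  ((hbPS qSY qWU s w u + (J2:ℝ) * (mSW qSY qWU s w / mW qSY qWU w)
                      + (M1:ℝ) * ((J2:ℝ) * mS qSY s)) *
                   (hbPY qSY qWU y w u + (J2:ℝ) * ((M2:ℝ)⁻¹ *
                      (mYW qSY qWU y w / mW qSY qWU w))))))))
            = (M1:ℝ) * ((J2:ℝ) * (∑ w : W, ∑ u : U,
              ind (d1 s (g1 w) ≤ D1 ∧ d2 s (g2 w u y) ≤ D2) *
                (hbPS qSY qWU s w u * hbPY qSY qWU y w u *
                  ((mW qSY qWU w * hbPUW qSY qWU w u) /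
                    ((hbPS qSY qWU s w u + (J2:ℝ) * (mSW qSY qWU s w / mW qSY qWU w)
                        + (M1:ℝ) * ((J2:ℝ) * mS qSY s)) *
                     (hbPY qSY qWU y w u + (J2:ℝ) * ((M2:ℝ)⁻¹ *
                        (mYW qSY qWU y w / mW qSY qWU w))))))))  := by
          simp only [Finset.sum_const, Finset.card_univ, Fintype.card_fin, nsmul_eq_mul]
          try ring
        rw [← h2]
        apply Finset.sum_le_sum
        intro i _
        apply Finset.sum_le_sum
        intro j _
        exact hIJ i j

end Assembly

-- ===================== Fubini and the theorem =====================

section TheEnd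

open Finset

variable (qSY : FinPMF (S × Y)) (qWU : S → FinPMF (W × U))
variable (M1 M2 J2 : ℕ)

lemma swap5 {Θ' : Type} [Fintype Θ'] (F : S → Y → Fin M1 → Fin J2 → Θ' → ℝ) :
    (∑ s : S, ∑ y : Y, ∑ i : Fin M1, ∑ j : Fin J2, ∑ θ : Θ', F s y i j θ)
      = ∑ θ : Θ', ∑ s : S, ∑ y : Y, ∑ i : Fin M1, ∑ j : Fin J2, F s y i j θ := by
  calc (∑ s : S, ∑ y : Y, ∑ i : Fin M1, ∑ j : Fin J2, ∑ θ : Θ', F s y i j θ)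
      = ∑ s : S, ∑ y : Y, ∑ i : Fin M1, ∑ θ : Θ', ∑ j : Fin J2, F s y i j θ := by
        apply Finset.sum_congr rfl; intro s _
        apply Finset.sum_congr rfl; intro y _
        apply Finset.sum_congr rfl; intro i _
        exact Finset.sum_comm
    _ = ∑ s : S, ∑ y : Y, ∑ θ : Θ', ∑ i : Fin M1, ∑ j : Fin J2, F s y i j θ := by
        apply Finset.sum_congr rfl; intro s _
        apply Finset.sum_congr rfl; intro y _
        exact Finset.sum_comm
    _ = ∑ s : S, ∑ θ : Θ', ∑ y : Y, ∑ i : Fin M1, ∑ j : Fin J2, F s y i j θ := by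
        apply Finset.sum_congr rfl; intro s _
        exact Finset.sum_comm
    _ = ∑ θ : Θ', ∑ s : S, ∑ y : Y, ∑ i : Fin M1, ∑ j : Fin J2, F s y i j θ :=
        Finset.sum_comm

set_option maxHeartbeats 2000000 in
lemma hbFub (d1 : S → R1 → ℝ) (d2 : S → R2 → ℝ) (D1 D2 : ℝ)
    (g1 : W → R1) (g2 : W → U → Y → R2) :
    (∑ s : S, ∑ y : Y, qSY.p (s, y) * ∑ i : Fin M1, ∑ j : Fin J2,
      ∑ θ : (Fin M1 → W × (Fin J2 → U)) × (Fin J2 → Fin M2),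
        hbMu qSY qWU M1 M2 J2 θ *
          ((hbPS qSY qWU s (θ.1 i).1 ((θ.1 i).2 j) / hbDenE qSY qWU M1 J2 θ.1 s) *
            ((hbPY qSY qWU y (θ.1 i).1 ((θ.1 i).2 j) /
                hbDenD qSY qWU M1 M2 J2 θ i (θ.2 j) y) *
              ind (d1 s (g1 ((θ.1 i).1)) ≤ D1 ∧
                d2 s (g2 ((θ.1 i).1) ((θ.1 i).2 j) y) ≤ D2))))
    = ∑ θ : (Fin M1 → W × (Fin J2 → U)) × (Fin J2 → Fin M2),
        hbMu qSY qWU M1 M2 J2 θ *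
          (∑ s : S, ∑ y : Y, qSY.p (s, y) * ∑ i : Fin M1, ∑ j : Fin J2,
            (hbPS qSY qWU s (θ.1 i).1 ((θ.1 i).2 j) / hbDenE qSY qWU M1 J2 θ.1 s) *
              ((hbPY qSY qWU y (θ.1 i).1 ((θ.1 i).2 j) /
                  hbDenD qSY qWU M1 M2 J2 θ i (θ.2 j) y) *
                ind (d1 s (g1 ((θ.1 i).1)) ≤ D1 ∧
                  d2 s (g2 ((θ.1 i).1) ((θ.1 i).2 j) y) ≤ D2))) := by
  calc _ = ∑ s : S, ∑ y : Y, ∑ i : Fin M1, ∑ j : Fin J2,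
        ∑ θ : (Fin M1 → W × (Fin J2 → U)) × (Fin J2 → Fin M2),
          qSY.p (s, y) * (hbMu qSY qWU M1 M2 J2 θ *
            ((hbPS qSY qWU s (θ.1 i).1 ((θ.1 i).2 j) / hbDenE qSY qWU M1 J2 θ.1 s) *
              ((hbPY qSY qWU y (θ.1 i).1 ((θ.1 i).2 j) /
                  hbDenD qSY qWU M1 M2 J2 θ i (θ.2 j) y) *
                ind (d1 s (g1 ((θ.1 i).1)) ≤ D1 ∧
                  d2 s (g2 ((θ.1 i).1) ((θ.1 i).2 j) y) ≤ D2)))) := by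
        apply Finset.sum_congr rfl; intro s _
        apply Finset.sum_congr rfl; intro y _
        simp only [Finset.mul_sum]
    _ = ∑ θ : (Fin M1 → W × (Fin J2 → U)) × (Fin J2 → Fin M2),
        ∑ s : S, ∑ y : Y, ∑ i : Fin M1, ∑ j : Fin J2,
          qSY.p (s, y) * (hbMu qSY qWU M1 M2 J2 θ *
            ((hbPS qSY qWU s (θ.1 i).1 ((θ.1 i).2 j) / hbDenE qSY qWU M1 J2 θ.1 s) *
              ((hbPY qSY qWU y (θ.1 i).1 ((θ.1 i).2 j) /
                  hbDenD qSY qWU M1 M2 J2 θ i (θ.2 j) y) *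
                ind (d1 s (g1 ((θ.1 i).1)) ≤ D1 ∧
                  d2 s (g2 ((θ.1 i).1) ((θ.1 i).2 j) y) ≤ D2)))) :=
      swap5 M1 J2 _
    _ = _ := by
        apply Finset.sum_congr rfl; intro θ _
        simp only [Finset.mul_sum]
        apply Finset.sum_congr rfl; intro s _
        apply Finset.sum_congr rfl; intro y _
        apply Finset.sum_congr rfl; intro i _
        apply Finset.sum_congr rfl; intro j _
        ring

end TheEnd

set_option maxHeartbeats 2000000 in
/-- One-shot Heegard–Berger/Kaspi achievability (with `M = M₁ M₂`, `J₂ ≥ M₂`). -/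
theorem oneShot_heegard_berger_kaspi (qSY : FinPMF (S × Y))
    (qWU : S → FinPMF (W × U)) (d1 : S → R1 → ℝ) (d2 : S → R2 → ℝ)
    (hd1 : ∀ s r, 0 ≤ d1 s r) (hd2 : ∀ s r, 0 ≤ d2 s r)
    (D1 D2 : ℝ) (hD1 : 0 ≤ D1) (hD2 : 0 ≤ D2)
    (g1 : W → R1) (g2 : W → U → Y → R2)
    (M1 M2 J2 : ℕ) (hM1 : 0 < M1) (hM2 : 0 < M2) (hJ2 : M2 ≤ J2) :
    ∃ (enc : S → FinPMF (Fin (M1 * M2))) (dec1 : Fin (M1 * M2) → FinPMF R1)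
      (dec2 : Fin (M1 * M2) → Y → FinPMF R2),
      pNoExcessHB (M1 * M2) qSY d1 d2 D1 D2 enc dec1 dec2 ≥
        ∑ s : S, ∑ y : Y, ∑ w : W, ∑ u : U,
          qHB qSY qWU s y w u *
          ind (d1 s (g1 w) ≤ D1 ∧ d2 s (g2 w u y) ≤ D2) *
          ((1 + (M1 : ℝ)⁻¹ * (2 : ℝ) ^ (iSW qSY qWU s w)
              + ((M1 : ℝ) * (J2 : ℝ))⁻¹ * (2 : ℝ) ^ (iSWU qSY qWU s w u)) *
           (1 + (J2 : ℝ) * (M2 : ℝ)⁻¹ * (2 : ℝ) ^ (-(iYUcW qSY qWU y u w))))⁻¹ := by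
  obtain ⟨⟨s0, y0⟩⟩ := qSY.nonempty'
  obtain ⟨⟨w0, u0⟩⟩ := (qWU s0).nonempty'
  haveI hUne : Nonempty U := ⟨u0⟩
  have hJ2pos : 0 < J2 := lt_of_lt_of_le hM2 hJ2
  haveI hTne : Nonempty ((Fin M1 → W × (Fin J2 → U)) × (Fin J2 → Fin M2)) :=
    ⟨(fun _ => (w0, fun _ => u0), fun _ => ⟨0, hM2⟩)⟩
  obtain ⟨θs, _, hmax⟩ := Finset.exists_max_image (Finset.univ)
    (fun θ : (Fin M1 → W × (Fin J2 → U)) × (Fin J2 → Fin M2) =>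
      pNoExcessHB (M1 * M2) qSY d1 d2 D1 D2
        (hbEnc qSY qWU M1 M2 J2 hM1 hJ2pos θ) (hbDec1 M1 M2 J2 g1 θ)
        (hbDec2 qSY qWU M1 M2 J2 g2 hJ2pos θ)) Finset.univ_nonempty
  refine ⟨hbEnc qSY qWU M1 M2 J2 hM1 hJ2pos θs, hbDec1 M1 M2 J2 g1 θs,
    hbDec2 qSY qWU M1 M2 J2 g2 hJ2pos θs, ?_⟩
  rw [ge_iff_le]
  calc (∑ s : S, ∑ y : Y, ∑ w : W, ∑ u : U,
      qHB qSY qWU s y w u *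
        ind (d1 s (g1 w) ≤ D1 ∧ d2 s (g2 w u y) ≤ D2) *
        ((1 + (M1 : ℝ)⁻¹ * (2 : ℝ) ^ (iSW qSY qWU s w)
            + ((M1 : ℝ) * (J2 : ℝ))⁻¹ * (2 : ℝ) ^ (iSWU qSY qWU s w u)) *
         (1 + (J2 : ℝ) * (M2 : ℝ)⁻¹ * (2 : ℝ) ^ (-(iYUcW qSY qWU y u w))))⁻¹)
      ≤ ∑ s : S, ∑ y : Y, qSY.p (s, y) * ∑ i : Fin M1, ∑ j : Fin J2,
          ∑ θ : (Fin M1 → W × (Fin J2 → U)) × (Fin J2 → Fin M2),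
            hbMu qSY qWU M1 M2 J2 θ *
              ((hbPS qSY qWU s (θ.1 i).1 ((θ.1 i).2 j) / hbDenE qSY qWU M1 J2 θ.1 s) *
                ((hbPY qSY qWU y (θ.1 i).1 ((θ.1 i).2 j) /
                    hbDenD qSY qWU M1 M2 J2 θ i (θ.2 j) y) *
                  ind (d1 s (g1 ((θ.1 i).1)) ≤ D1 ∧
                    d2 s (g2 ((θ.1 i).1) ((θ.1 i).2 j) y) ≤ D2))) := by
        apply Finset.sum_le_sum
        intro s _
        apply Finset.sum_le_sum
        intro y _
        exact hbPerSY qSY qWU M1 M2 J2 hUne hM1 hM2 hJ2pos d1 d2 D1 D2 g1 g2 s y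
    _ = ∑ θ : (Fin M1 → W × (Fin J2 → U)) × (Fin J2 → Fin M2),
          hbMu qSY qWU M1 M2 J2 θ *
            (∑ s : S, ∑ y : Y, qSY.p (s, y) * ∑ i : Fin M1, ∑ j : Fin J2,
              (hbPS qSY qWU s (θ.1 i).1 ((θ.1 i).2 j) / hbDenE qSY qWU M1 J2 θ.1 s) *
                ((hbPY qSY qWU y (θ.1 i).1 ((θ.1 i).2 j) /
                    hbDenD qSY qWU M1 M2 J2 θ i (θ.2 j) y) *
                  ind (d1 s (g1 ((θ.1 i).1)) ≤ D1 ∧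
                    d2 s (g2 ((θ.1 i).1) ((θ.1 i).2 j) y) ≤ D2))) :=
        hbFub qSY qWU M1 M2 J2 d1 d2 D1 D2 g1 g2
    _ ≤ ∑ θ : (Fin M1 → W × (Fin J2 → U)) × (Fin J2 → Fin M2),
          hbMu qSY qWU M1 M2 J2 θ *
            pNoExcessHB (M1 * M2) qSY d1 d2 D1 D2
              (hbEnc qSY qWU M1 M2 J2 hM1 hJ2pos θ) (hbDec1 M1 M2 J2 g1 θ)
              (hbDec2 qSY qWU M1 M2 J2 g2 hJ2pos θ) := by
        apply Finset.sum_le_sum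
        intro θ _
        exact mul_le_mul_of_nonneg_left
          (hbStepB qSY qWU M1 M2 J2 d1 d2 D1 D2 g1 g2 hM1 hJ2pos θ)
          (hbMu_nonneg qSY qWU M1 M2 J2 θ)
    _ ≤ ∑ θ : (Fin M1 → W × (Fin J2 → U)) × (Fin J2 → Fin M2),
          hbMu qSY qWU M1 M2 J2 θ *
            pNoExcessHB (M1 * M2) qSY d1 d2 D1 D2
              (hbEnc qSY qWU M1 M2 J2 hM1 hJ2pos θs) (hbDec1 M1 M2 J2 g1 θs)
              (hbDec2 qSY qWU M1 M2 J2 g2 hJ2pos θs) := by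
        apply Finset.sum_le_sum
        intro θ _
        exact mul_le_mul_of_nonneg_left (hmax θ (Finset.mem_univ θ))
          (hbMu_nonneg qSY qWU M1 M2 J2 θ)
    _ = pNoExcessHB (M1 * M2) qSY d1 d2 D1 D2
          (hbEnc qSY qWU M1 M2 J2 hM1 hJ2pos θs) (hbDec1 M1 M2 J2 g1 θs)
          (hbDec2 qSY qWU M1 M2 J2 g2 hJ2pos θs) := by
        rw [← Finset.sum_mul, hbMu_sum qSY qWU M1 M2 J2 hUne hM2, one_mul]
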